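/- arXiv:1208.5823 — 5 statements merged into one kernel-verified Lean document; each statement's English description precedes it below -/
import Mathlib

section
/- (Fourth-moment deviation bound for the diagonal quadratic form.) Let x_1, …, x_n be independent real random variables with mean 0 and variance 1 and max_i E|x_i|^l ≤ ν_l for l = 4 and l = 8 (with ν_8 < ∞), and let M_n = (m_{ij}) be a deterministic nonnegative definite n×n real matrix. Then there is an absolute constant C > 0 such that E| Σ_{i=1}^n m_{ii}·x_i^2 − tr M_n |^4 ≤ C·( ν_8·tr(M_n^4) + (ν_4·tr(M_n^2))^2 ). -/
open MeasureTheory ProbabilityTheory Filter Real Finset Topology Matrix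

lemma pow_four_add_le (a b : ℝ) : (a + b)^4 ≤ 8*(a^4 + b^4) := by
  nlinarith [sq_nonneg (a+b), sq_nonneg (a-b), sq_nonneg (a^2-b^2), sq_nonneg (a^2+b^2),
    sq_nonneg (a*b), sq_nonneg a, sq_nonneg b]

section Helpers

variable {Ω : Type} [MeasureSpace Ω] [IsProbabilityMeasure (ℙ : Measure Ω)]

lemma integrable_pow_of_pow_four {f : Ω → ℝ} (hf : AEStronglyMeasurable f ℙ)
    (h4 : Integrable (fun ω => (f ω) ^ 4) ℙ) {k : ℕ} (hk : k ≤ 4) :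
    Integrable (fun ω => (f ω) ^ k) ℙ := by
  refine Integrable.mono' (h4.add (integrable_const 1))
    ((hf.aemeasurable.pow_const k).aestronglyMeasurable) ?_
  filter_upwards with ω
  show ‖f ω ^ k‖ ≤ f ω ^ 4 + 1
  rw [Real.norm_eq_abs, abs_pow]
  have h40 : (0:ℝ) ≤ f ω ^ 4 := by positivity
  rcases le_total (|f ω|) 1 with h | h
  · have : |f ω| ^ k ≤ 1 := pow_le_one₀ (abs_nonneg _) h
    linarith
  · have h1 : |f ω| ^ k ≤ |f ω| ^ 4 := pow_le_pow_right₀ h hk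
    have h2 : |f ω| ^ 4 = f ω ^ 4 := by rw [← abs_pow, abs_of_nonneg h40]
    linarith

lemma fourth_moment_sum {n : ℕ} {y : Fin n → Ω → ℝ} (hmeas : ∀ i, Measurable (y i))
    (hindep : iIndepFun y ℙ)
    (hint : ∀ i, Integrable (fun ω => (y i ω) ^ 4) ℙ)
    (hmean : ∀ i, ∫ ω, y i ω ∂ℙ = 0) (s : Finset (Fin n)) :
    Integrable (fun ω => (∑ i ∈ s, y i ω) ^ 4) ℙ ∧
    (∫ ω, (∑ i ∈ s, y i ω) ∂ℙ) = 0 ∧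
    (∫ ω, (∑ i ∈ s, y i ω) ^ 2 ∂ℙ) = ∑ i ∈ s, ∫ ω, (y i ω) ^ 2 ∂ℙ ∧
    (∫ ω, (∑ i ∈ s, y i ω) ^ 4 ∂ℙ) ≤
      (∑ i ∈ s, ∫ ω, (y i ω) ^ 4 ∂ℙ) + 3 * (∑ i ∈ s, ∫ ω, (y i ω) ^ 2 ∂ℙ) ^ 2 := by
  induction s using Finset.induction_on with
  | empty =>
      refine ⟨by simpa using integrable_const (0:ℝ), by simp, by simp, by simp⟩
  | @insert a s ha IH =>
      obtain ⟨hS4, hSmean, hSvar, hSle⟩ := IH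
      set S : Ω → ℝ := fun ω => ∑ i ∈ s, y i ω with hSdef
      set b : Ω → ℝ := y a with hbdef
      have hSmeas : Measurable S := Finset.measurable_sum s (fun i _ => hmeas i)
      have hSb : IndepFun S b ℙ := by
        have h := hindep.indepFun_finsetSum_of_notMem hmeas ha
        have he : (∑ j ∈ s, y j) = S := by funext ω; simp [hSdef]
        rwa [he] at h
      have hcomp : ∀ (j k : ℕ), IndepFun (fun ω => S ω ^ j) (fun ω => b ω ^ k) ℙ := fun j k =>
        hSb.comp (measurable_id.pow_const j) (measurable_id.pow_const k)
      have hSk : ∀ k, k ≤ 4 → Integrable (fun ω => S ω ^ k) ℙ := fun k hk =>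
        integrable_pow_of_pow_four hSmeas.aestronglyMeasurable hS4 hk
      have hbk : ∀ k, k ≤ 4 → Integrable (fun ω => b ω ^ k) ℙ := fun k hk =>
        integrable_pow_of_pow_four (hmeas a).aestronglyMeasurable (hint a) hk
      have hP : ∀ j k, j ≤ 4 → k ≤ 4 → Integrable (fun ω => S ω ^ j * b ω ^ k) ℙ :=
        fun j k hj hk => (hcomp j k).integrable_mul (hSk j hj) (hbk k hk)
      have hI : ∀ j k : ℕ, (∫ ω, S ω ^ j * b ω ^ k ∂ℙ)
          = (∫ ω, S ω ^ j ∂ℙ) * ∫ ω, b ω ^ k ∂ℙ := fun j k =>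
        (hcomp j k).integral_mul_eq_mul_integral (hSmeas.pow_const j).aestronglyMeasurable
          ((hmeas a).pow_const k).aestronglyMeasurable
      have hb1 : Integrable b ℙ := by simpa using hbk 1 (by norm_num)
      have hS1 : Integrable S ℙ := by simpa using hSk 1 (by norm_num)
      have hbmean : ∫ ω, b ω ∂ℙ = 0 := hmean a
      have hnew : ∀ ω, (∑ i ∈ insert a s, y i ω) = b ω + S ω := fun ω => by
        rw [Finset.sum_insert ha]
      -- integrability of the new sum to the fourth
      have hT4 : Integrable (fun ω => (∑ i ∈ insert a s, y i ω) ^ 4) ℙ := by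
        simp only [hnew]
        refine Integrable.mono' (((hint a).add hS4).const_mul 8)
          (((((hmeas a).add hSmeas)).pow_const 4).aestronglyMeasurable) ?_
        filter_upwards with ω
        show ‖(b ω + S ω) ^ 4‖ ≤ 8 * (y a ω ^ 4 + (∑ i ∈ s, y i ω) ^ 4)
        rw [Real.norm_eq_abs, abs_of_nonneg (by positivity : (0:ℝ) ≤ (b ω + S ω)^4)]
        have := pow_four_add_le (b ω) (S ω)
        simp only [hbdef, hSdef] at this ⊢
        linarith
      have hTmeas : Measurable (fun ω => b ω + S ω) := (hmeas a).add hSmeas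
      -- mean zero
      have hTmean : ∫ ω, (∑ i ∈ insert a s, y i ω) ∂ℙ = 0 := by
        simp only [hnew]
        rw [integral_add hb1 hS1, hbmean, hSmean, add_zero]
      -- specialized product facts
      have hP11 : Integrable (fun ω => S ω * b ω) ℙ := by
        simpa using hP 1 1 (by norm_num) (by norm_num)
      have hI11 : (∫ ω, S ω * b ω ∂ℙ) = (∫ ω, S ω ∂ℙ) * ∫ ω, b ω ∂ℙ := by
        simpa using hI 1 1
      have hP31 : Integrable (fun ω => S ω ^ 3 * b ω) ℙ := by
        simpa using hP 3 1 (by norm_num) (by norm_num)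
      have hI31 : (∫ ω, S ω ^ 3 * b ω ∂ℙ) = (∫ ω, S ω ^ 3 ∂ℙ) * ∫ ω, b ω ∂ℙ := by
        simpa using hI 3 1
      have hP22 : Integrable (fun ω => S ω ^ 2 * b ω ^ 2) ℙ :=
        hP 2 2 (by norm_num) (by norm_num)
      have hI22 := hI 2 2
      have hP13 : Integrable (fun ω => S ω * b ω ^ 3) ℙ := by
        simpa using hP 1 3 (by norm_num) (by norm_num)
      have hI13 : (∫ ω, S ω * b ω ^ 3 ∂ℙ) = (∫ ω, S ω ∂ℙ) * ∫ ω, b ω ^ 3 ∂ℙ := by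
        simpa using hI 1 3
      -- second moment
      have hSmean0 : ∫ ω, S ω ∂ℙ = 0 := hSmean
      have hTvar : ∫ ω, (∑ i ∈ insert a s, y i ω) ^ 2 ∂ℙ
          = ∑ i ∈ insert a s, ∫ ω, (y i ω) ^ 2 ∂ℙ := by
        simp only [hnew]
        have e2 : (fun ω => (b ω + S ω)^2)
            = fun ω => S ω ^ 2 + (2 * (S ω * b ω) + b ω ^ 2) := by
          funext ω; ring
        have hg2 : Integrable (fun ω => 2 * (S ω * b ω) + b ω ^ 2) ℙ :=
          (hP11.const_mul 2).add (hbk 2 (by norm_num))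
        have hg1 : Integrable (fun ω => 2 * (S ω * b ω)) ℙ := hP11.const_mul 2
        rw [e2, integral_add (hSk 2 (by norm_num)) hg2,
          integral_add hg1 (hbk 2 (by norm_num)),
          integral_const_mul, hI11, hSmean0, Finset.sum_insert ha, hSvar]
        ring
      refine ⟨hT4, hTmean, hTvar, ?_⟩
      -- fourth moment inequality
      have e4 : (fun ω => (∑ i ∈ insert a s, y i ω) ^ 4)
          = fun ω => S ω ^ 4 + (4 * (S ω ^ 3 * b ω) + (6 * (S ω ^ 2 * b ω ^ 2)
            + (4 * (S ω * b ω ^ 3) + b ω ^ 4))) := by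
        funext ω; rw [hnew]; ring
      have hint4 : ∫ ω, (∑ i ∈ insert a s, y i ω) ^ 4 ∂ℙ
          = ∫ ω, S ω ^ 4 ∂ℙ + (4 * ((∫ ω, S ω ^ 3 ∂ℙ) * ∫ ω, b ω ∂ℙ)
            + (6 * ((∫ ω, S ω ^ 2 ∂ℙ) * ∫ ω, b ω ^ 2 ∂ℙ)
            + (4 * ((∫ ω, S ω ∂ℙ) * ∫ ω, b ω ^ 3 ∂ℙ) + ∫ ω, b ω ^ 4 ∂ℙ))) := by
        have g1 : Integrable (fun ω => 4 * (S ω * b ω ^ 3) + b ω ^ 4) ℙ :=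
          (hP13.const_mul 4).add (hbk 4 (by norm_num))
        have g2 : Integrable (fun ω => 6 * (S ω ^ 2 * b ω ^ 2)
            + (4 * (S ω * b ω ^ 3) + b ω ^ 4)) ℙ := (hP22.const_mul 6).add g1
        have g3 : Integrable (fun ω => 4 * (S ω ^ 3 * b ω) + (6 * (S ω ^ 2 * b ω ^ 2)
            + (4 * (S ω * b ω ^ 3) + b ω ^ 4))) ℙ := (hP31.const_mul 4).add g2
        rw [e4, integral_add (hSk 4 (by norm_num)) g3,
          integral_add (hP31.const_mul 4) g2,
          integral_add (hP22.const_mul 6) g1,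
          integral_add (hP13.const_mul 4) (hbk 4 (by norm_num)),
          integral_const_mul, integral_const_mul, integral_const_mul, hI31, hI22, hI13]
      rw [hint4, hbmean, hSmean0, hSvar]
      have hb2 : 0 ≤ ∫ ω, b ω ^ 2 ∂ℙ := integral_nonneg fun ω => by positivity
      have hA : 0 ≤ ∑ i ∈ s, ∫ ω, (y i ω) ^ 2 ∂ℙ :=
        Finset.sum_nonneg fun i _ => integral_nonneg fun ω => by positivity
      rw [Finset.sum_insert ha, Finset.sum_insert ha]
      have hb2' : (∫ ω, b ω ^ 2 ∂ℙ) = ∫ ω, (y a ω) ^ 2 ∂ℙ := rfl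
      have hb4' : (∫ ω, b ω ^ 4 ∂ℙ) = ∫ ω, (y a ω) ^ 4 ∂ℙ := rfl
      nlinarith [sq_nonneg (∫ ω, b ω ^ 2 ∂ℙ), hSle,
        sq_nonneg ((∑ i ∈ s, ∫ ω, (y i ω) ^ 2 ∂ℙ) + ∫ ω, b ω ^ 2 ∂ℙ)]

lemma integrable_pow_four_right_of_indep {A B : Ω → ℝ} (hA : Measurable A) (hB : Measurable B)
    (h : IndepFun A B ℙ) (hint : Integrable (fun ω => (A ω + B ω) ^ 4) ℙ) :
    Integrable (fun ω => (B ω) ^ 4) ℙ := by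
  have hmap : Measure.map (fun ω => (A ω, B ω)) ℙ = (Measure.map A ℙ).prod (Measure.map B ℙ) :=
    (indepFun_iff_map_prod_eq_prod_map_map hA.aemeasurable hB.aemeasurable).mp h
  haveI : IsProbabilityMeasure (Measure.map A ℙ) := Measure.isProbabilityMeasure_map hA.aemeasurable
  haveI : IsProbabilityMeasure (Measure.map B ℙ) := Measure.isProbabilityMeasure_map hB.aemeasurable
  have hcont : Continuous fun p : ℝ × ℝ => (p.1 + p.2) ^ 4 := by fun_prop
  have h1 : Integrable (fun p : ℝ × ℝ => (p.1 + p.2) ^ 4)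
      ((Measure.map A ℙ).prod (Measure.map B ℙ)) := by
    rw [← hmap, integrable_map_measure hcont.aestronglyMeasurable (hA.prodMk hB).aemeasurable]
    exact hint
  have h2 := h1.prod_right_ae
  haveI : (ae (Measure.map A ℙ)).NeBot :=
    ae_neBot.mpr (IsProbabilityMeasure.ne_zero (μ := Measure.map A ℙ))
  obtain ⟨c, hc⟩ := h2.exists
  have h3 : Integrable (fun t : ℝ => t ^ 4) (Measure.map B ℙ) := by
    refine Integrable.mono' ((hc.add (integrable_const (c ^ 4))).const_mul 8)
      (measurable_id.pow_const 4).aestronglyMeasurable ?_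
    filter_upwards with t
    show ‖t ^ 4‖ ≤ 8 * ((c + t) ^ 4 + c ^ 4)
    rw [Real.norm_eq_abs, abs_of_nonneg (by positivity : (0:ℝ) ≤ t ^ 4)]
    nlinarith [pow_four_add_le (c + t) (-c)]
  exact h3.comp_aemeasurable hB.aemeasurable

end Helpers

lemma trace_mul_self_facts {n : ℕ} (M : Matrix (Fin n) (Fin n) ℝ)
    (hsym : ∀ i j, M i j = M j i) :
    (∀ i, 0 ≤ (M * M) i i) ∧ (∀ i, (M i i) ^ 2 ≤ (M * M) i i) := by
  have h0 : ∀ i j, M i j * M j i = (M i j) ^ 2 := fun i j => by rw [hsym j i]; ring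
  constructor
  · intro i
    rw [Matrix.mul_apply]
    exact Finset.sum_nonneg fun j _ => by
      show (0:ℝ) ≤ M i j * M j i; rw [h0 i j]; positivity
  · intro i
    rw [Matrix.mul_apply]
    have h1 := Finset.single_le_sum (f := fun j => M i j * M j i)
      (fun j _ => by show (0:ℝ) ≤ M i j * M j i; rw [h0 i j]; positivity) (Finset.mem_univ i)
    nlinarith [h1]

set_option maxHeartbeats 1000000 in
/-- **Fourth-moment deviation bound for the diagonal quadratic form.**
There is an absolute constant `C > 0` such that for independent real random variables
`x_1, …, x_n` with mean `0`, variance `1`, `E|x_i|^4 ≤ ν₄` and `E|x_i|^8 ≤ ν₈`, and any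
deterministic nonnegative definite `n × n` real matrix `M`,
`E|Σ_i m_ii x_i² - tr M|⁴ ≤ C (ν₈ tr(M⁴) + (ν₄ tr(M²))²)`. -/
theorem diagonal_quadratic_form_fourth_moment_bound :
    ∃ C : ℝ, 0 < C ∧
      ∀ (n : ℕ) (Ω : Type) (_ : MeasureSpace Ω) (_ : IsProbabilityMeasure (ℙ : Measure Ω))
        (x : Fin n → Ω → ℝ) (ν₄ ν₈ : ℝ),
        (∀ i, Measurable (x i)) →
        iIndepFun x ℙ →
        (∀ i, ∫ ω, x i ω ∂ℙ = 0) →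
        (∀ i, ∫ ω, (x i ω) ^ 2 ∂ℙ = 1) →
        (∀ i, ∫ ω, |x i ω| ^ 4 ∂ℙ ≤ ν₄) →
        (∀ i, ∫ ω, |x i ω| ^ 8 ∂ℙ ≤ ν₈) →
        ∀ M : Matrix (Fin n) (Fin n) ℝ, M.PosSemidef →
          ∫ ω, |(∑ i, M i i * (x i ω) ^ 2) - Matrix.trace M| ^ 4 ∂ℙ ≤
            C * (ν₈ * Matrix.trace (M ^ 4) + (ν₄ * Matrix.trace (M ^ 2)) ^ 2) := by
  refine ⟨16, by norm_num, ?_⟩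
  intro n Ω _ _ x ν₄ ν₈ hxm hind hXmean hXvar h4 h8 M hM
  -- symmetry of M
  have hsym : ∀ i j, M i j = M j i := by
    intro i j
    have h := congrFun (congrFun hM.1 j) i
    rwa [Matrix.conjTranspose_apply, star_trivial] at h
  obtain ⟨hN0, hNle⟩ := trace_mul_self_facts M hsym
  have hsymN : ∀ i j, (M * M) i j = (M * M) j i := by
    intro i j
    simp only [Matrix.mul_apply]
    exact Finset.sum_congr rfl fun k _ => by rw [hsym i k, hsym k j]; ring
  obtain ⟨hNN0, hNNle⟩ := trace_mul_self_facts (M * M) hsymN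
  have htr2 : Matrix.trace (M ^ 2) = ∑ i, (M * M) i i := by
    rw [pow_two]; simp [Matrix.trace, Matrix.diag]
  have hM4 : M ^ 4 = (M * M) * (M * M) := by
    rw [show (4:ℕ) = 2 + 2 from rfl, pow_add, pow_two]
  have htr4 : Matrix.trace (M ^ 4) = ∑ i, ((M * M) * (M * M)) i i := by
    rw [hM4]; simp [Matrix.trace, Matrix.diag]
  have htrace2_ge : ∑ i, (M i i) ^ 2 ≤ Matrix.trace (M ^ 2) := by
    rw [htr2]; exact Finset.sum_le_sum fun i _ => hNle i
  have htrace2_0 : 0 ≤ Matrix.trace (M ^ 2) := by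
    rw [htr2]; exact Finset.sum_nonneg fun i _ => hN0 i
  have htrace4_ge : ∑ i, (M i i) ^ 4 ≤ Matrix.trace (M ^ 4) := by
    rw [htr4]
    refine Finset.sum_le_sum fun i _ => ?_
    have h1 : (M i i) ^ 4 ≤ ((M * M) i i) ^ 2 := by
      have := pow_le_pow_left₀ (sq_nonneg (M i i)) (hNle i) 2
      calc (M i i) ^ 4 = ((M i i) ^ 2) ^ 2 := by ring
      _ ≤ ((M * M) i i) ^ 2 := this
    exact h1.trans (hNNle i)
  have htrace4_0 : 0 ≤ Matrix.trace (M ^ 4) := by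
    rw [htr4]; exact Finset.sum_nonneg fun i _ => hNN0 i
  have htraceM : Matrix.trace M = ∑ i, M i i := by simp [Matrix.trace, Matrix.diag]
  -- degenerate case n = 0
  rcases Nat.eq_zero_or_pos n with hn0 | hn0
  · subst hn0
    have hMtr : Matrix.trace M = 0 := by simp [htraceM]
    have : (fun ω : Ω => |(∑ i, M i i * (x i ω) ^ 2) - Matrix.trace M| ^ 4)
        = fun _ : Ω => (0:ℝ) := by
      funext ω; simp [hMtr]
    rw [this, integral_zero]
    have hMtr2 : Matrix.trace (M ^ 2) = 0 := by rw [htr2]; simp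
    have hMtr4 : Matrix.trace (M ^ 4) = 0 := by rw [htr4]; simp
    rw [hMtr2, hMtr4]
    norm_num
  -- nondegenerate case
  have i1 : Fin n := ⟨0, hn0⟩
  have habs4 : ∀ i, (fun ω => |x i ω| ^ 4) = fun ω => (x i ω) ^ 4 := fun i =>
    funext fun ω => by rw [pow_abs, abs_of_nonneg (by positivity : (0:ℝ) ≤ (x i ω) ^ 4)]
  have habs8 : ∀ i, (fun ω => |x i ω| ^ 8) = fun ω => (x i ω) ^ 8 := fun i =>
    funext fun ω => by rw [pow_abs, abs_of_nonneg (by positivity : (0:ℝ) ≤ (x i ω) ^ 8)]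
  have h4' : ∀ i, ∫ ω, (x i ω) ^ 4 ∂ℙ ≤ ν₄ := fun i => by
    have := h4 i; rwa [habs4 i] at this
  have h8' : ∀ i, ∫ ω, (x i ω) ^ 8 ∂ℙ ≤ ν₈ := fun i => by
    have := h8 i; rwa [habs8 i] at this
  have hν₄0 : 0 ≤ ν₄ := le_trans (integral_nonneg fun ω => by positivity) (h4' i1)
  have hν₈0 : 0 ≤ ν₈ := le_trans (integral_nonneg fun ω => by positivity) (h8' i1)
  have hx2int : ∀ i, Integrable (fun ω => (x i ω) ^ 2) ℙ := fun i => by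
    by_contra hcon
    have := hXvar i
    rw [integral_undef hcon] at this
    exact zero_ne_one this
  set y : Fin n → Ω → ℝ := fun i ω => M i i * ((x i ω) ^ 2 - 1) with hy
  have hymeas : ∀ i, Measurable (y i) := fun i =>
    (((hxm i).pow_const 2).sub measurable_const).const_mul _
  have hyind : iIndepFun y ℙ :=
    hind.comp (fun i t => M i i * (t ^ 2 - 1))
      (fun i => ((measurable_id.pow_const 2).sub measurable_const).const_mul _)
  have hymean : ∀ i, ∫ ω, y i ω ∂ℙ = 0 := fun i => by
    simp only [hy]
    rw [integral_const_mul, integral_sub (hx2int i) (integrable_const 1), hXvar i,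
      integral_const]
    simp
  have hLHS : (fun ω => |(∑ i, M i i * (x i ω) ^ 2) - Matrix.trace M| ^ 4)
      = fun ω => (∑ i, y i ω) ^ 4 := by
    funext ω
    have h1 : (∑ i, M i i * (x i ω) ^ 2) - Matrix.trace M = ∑ i, y i ω := by
      rw [htraceM, ← Finset.sum_sub_distrib]
      exact Finset.sum_congr rfl fun i _ => by simp only [hy]; ring
    rw [h1, pow_abs, abs_of_nonneg (by positivity : (0:ℝ) ≤ (∑ i, y i ω) ^ 4)]
  rw [show (∫ ω, |(∑ i, M i i * (x i ω) ^ 2) - Matrix.trace M| ^ 4 ∂ℙ)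
      = ∫ ω, (∑ i, y i ω) ^ 4 ∂ℙ from congrArg (integral ℙ) hLHS]
  by_cases hgood : ∀ i, M i i ≠ 0 → Integrable (fun ω => (x i ω) ^ 8) ℙ
  · -- good case: all needed moments exist
    have hyint4 : ∀ i, Integrable (fun ω => (y i ω) ^ 4) ℙ := by
      intro i
      by_cases h0 : M i i = 0
      · have : (fun ω => (y i ω) ^ 4) = fun _ => (0:ℝ) := by
          funext ω; simp [hy, h0]
        rw [this]; exact integrable_const 0
      · have hx8i := hgood i h0
        refine Integrable.mono' ((hx8i.add (integrable_const 1)).const_mul (8 * (M i i) ^ 4))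
          ((hymeas i).pow_const 4).aestronglyMeasurable ?_
        filter_upwards with ω
        show ‖(y i ω) ^ 4‖ ≤ 8 * (M i i) ^ 4 * ((x i ω) ^ 8 + 1)
        rw [Real.norm_eq_abs, abs_of_nonneg (by positivity : (0:ℝ) ≤ (y i ω) ^ 4)]
        have hm4 : (0:ℝ) ≤ (M i i) ^ 4 := by positivity
        have h1 := pow_four_add_le ((x i ω) ^ 2) (-1)
        simp only [hy]
        nlinarith [h1, hm4]
    have hx4int : ∀ i, M i i ≠ 0 → Integrable (fun ω => (x i ω) ^ 4) ℙ := by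
      intro i h0
      have h8i : Integrable (fun ω => ((x i ω) ^ 2) ^ 4) ℙ := by
        have e : (fun ω => ((x i ω) ^ 2) ^ 4) = fun ω => (x i ω) ^ 8 := by
          funext ω; ring
        rw [e]; exact hgood i h0
      have := integrable_pow_of_pow_four ((hxm i).pow_const 2).aestronglyMeasurable h8i
        (k := 2) (by norm_num)
      have e : (fun ω => ((x i ω) ^ 2) ^ 2) = fun ω => (x i ω) ^ 4 := by
        funext ω; ring
      rwa [e] at this
    have hy2le : ∀ i, (∫ ω, (y i ω) ^ 2 ∂ℙ) ≤ (M i i) ^ 2 * ν₄ := by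
      intro i
      by_cases h0 : M i i = 0
      · have : (fun ω => (y i ω) ^ 2) = fun _ => (0:ℝ) := by funext ω; simp [hy, h0]
        rw [this, integral_zero, h0]
        nlinarith [hν₄0]
      · have hx4i := hx4int i h0
        have e : (fun ω => (y i ω) ^ 2)
            = fun ω => (M i i) ^ 2 * ((x i ω) ^ 4 - 2 * (x i ω) ^ 2 + 1) := by
          funext ω; simp only [hy]; ring
        rw [e, integral_const_mul]
        have eint : ∫ ω, ((x i ω) ^ 4 - 2 * (x i ω) ^ 2 + 1) ∂ℙ
            = (∫ ω, (x i ω) ^ 4 ∂ℙ) - 2 * (∫ ω, (x i ω) ^ 2 ∂ℙ) + 1 := by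
          have hsub : Integrable (fun ω => (x i ω) ^ 4 - 2 * (x i ω) ^ 2) ℙ :=
            hx4i.sub ((hx2int i).const_mul 2)
          rw [integral_add hsub (integrable_const 1),
            integral_sub hx4i ((hx2int i).const_mul 2), integral_const_mul, integral_const]
          simp
        rw [eint, hXvar i]
        have : (∫ ω, (x i ω) ^ 4 ∂ℙ) - 2 * 1 + 1 ≤ ν₄ := by linarith [h4' i]
        exact mul_le_mul_of_nonneg_left this (sq_nonneg _)
    have hy4le : ∀ i, (∫ ω, (y i ω) ^ 4 ∂ℙ) ≤ 16 * ν₈ * (M i i) ^ 4 := by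
      intro i
      by_cases h0 : M i i = 0
      · have : (fun ω => (y i ω) ^ 4) = fun _ => (0:ℝ) := by funext ω; simp [hy, h0]
        rw [this, integral_zero, h0]
        norm_num
      · have hx8i := hgood i h0
        have hm4 : (0:ℝ) ≤ (M i i) ^ 4 := by positivity
        have hν₈1 : 1 ≤ ∫ ω, (x i ω) ^ 8 ∂ℙ := by
          have hle : ∀ ω, 4 * (x i ω) ^ 2 ≤ (x i ω) ^ 8 + 3 := fun ω => by
            nlinarith [sq_nonneg ((x i ω)^2 - 1), sq_nonneg ((x i ω)^4 - 1),
              sq_nonneg ((x i ω)^2 + 1), sq_nonneg (x i ω), sq_nonneg ((x i ω)^3 - x i ω)]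
          have hadd3 : Integrable (fun ω => (x i ω) ^ 8 + 3) ℙ := hx8i.add (integrable_const 3)
          have hmono := integral_mono ((hx2int i).const_mul 4) hadd3 (fun ω => hle ω)
          rw [integral_const_mul, hXvar i, integral_add hx8i (integrable_const 3),
            integral_const] at hmono
          simp at hmono
          linarith
        have hpw : ∀ ω, (y i ω) ^ 4 ≤ 8 * (M i i) ^ 4 * ((x i ω) ^ 8 + 1) := fun ω => by
          have h1 := pow_four_add_le ((x i ω) ^ 2) (-1)
          simp only [hy]
          nlinarith [h1, hm4]
        have hadd1 : Integrable (fun ω => 8 * (M i i) ^ 4 * ((x i ω) ^ 8 + 1)) ℙ :=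
          (hx8i.add (integrable_const 1)).const_mul (8 * (M i i) ^ 4)
        have hmono := integral_mono (hyint4 i) hadd1 (fun ω => hpw ω)
        rw [integral_const_mul, integral_add hx8i (integrable_const 1), integral_const] at hmono
        simp at hmono
        have h8le := h8' i
        nlinarith [hmono, hm4, hν₈1, h8le]
    obtain ⟨hTint, _, _, hTle⟩ := fourth_moment_sum hymeas hyind hyint4 hymean Finset.univ
    have h2nn : 0 ≤ ∑ i, ∫ ω, (y i ω) ^ 2 ∂ℙ :=
      Finset.sum_nonneg fun i _ => integral_nonneg fun ω => by positivity
    have hsum2 : (∑ i, ∫ ω, (y i ω) ^ 2 ∂ℙ) ≤ ν₄ * Matrix.trace (M ^ 2) := by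
      calc (∑ i, ∫ ω, (y i ω) ^ 2 ∂ℙ) ≤ ∑ i, (M i i) ^ 2 * ν₄ :=
            Finset.sum_le_sum fun i _ => hy2le i
        _ = ν₄ * ∑ i, (M i i) ^ 2 := by rw [Finset.mul_sum]; exact Finset.sum_congr rfl (fun i _ => by ring)
        _ ≤ ν₄ * Matrix.trace (M ^ 2) := mul_le_mul_of_nonneg_left htrace2_ge hν₄0
    have hsum4 : (∑ i, ∫ ω, (y i ω) ^ 4 ∂ℙ) ≤ 16 * (ν₈ * Matrix.trace (M ^ 4)) := by
      calc (∑ i, ∫ ω, (y i ω) ^ 4 ∂ℙ) ≤ ∑ i, 16 * ν₈ * (M i i) ^ 4 :=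
            Finset.sum_le_sum fun i _ => hy4le i
        _ = 16 * ν₈ * ∑ i, (M i i) ^ 4 := by rw [Finset.mul_sum]
        _ ≤ 16 * (ν₈ * Matrix.trace (M ^ 4)) := by
            have := mul_le_mul_of_nonneg_left htrace4_ge hν₈0
            nlinarith [this]
    have hsq : (∑ i, ∫ ω, (y i ω) ^ 2 ∂ℙ) ^ 2 ≤ (ν₄ * Matrix.trace (M ^ 2)) ^ 2 :=
      pow_le_pow_left₀ h2nn hsum2 2
    have := hTle
    nlinarith [this, hsum4, hsq, sq_nonneg (ν₄ * Matrix.trace (M ^ 2))]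
  · -- bad case: some eighth moment fails to exist; the LHS integral is 0
    push_neg at hgood
    obtain ⟨i₀, hm0, hni⟩ := hgood
    have hnint : ¬ Integrable (fun ω => (∑ i, y i ω) ^ 4) ℙ := by
      intro hcon
      set A : Ω → ℝ := fun ω => ∑ i ∈ Finset.univ.erase i₀, y i ω with hA
      have hAmeas : Measurable A := Finset.measurable_sum _ (fun i _ => hymeas i)
      have hAB : IndepFun A (y i₀) ℙ := by
        have h := hyind.indepFun_finsetSum_of_notMem hymeas (Finset.notMem_erase i₀ Finset.univ)
        have he : (∑ j ∈ Finset.univ.erase i₀, y j) = A := by funext ω; simp [hA]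
        rwa [he] at h
      have hsplit : (fun ω => (A ω + y i₀ ω) ^ 4) = fun ω => (∑ i, y i ω) ^ 4 := by
        funext ω
        rw [hA]
        simp only
        rw [Finset.sum_erase_add _ _ (Finset.mem_univ i₀)]
      have hB4 : Integrable (fun ω => (y i₀ ω) ^ 4) ℙ :=
        integrable_pow_four_right_of_indep hAmeas (hymeas i₀) hAB (by rw [hsplit]; exact hcon)
      apply hni
      have hm4 : (0:ℝ) < (M i₀ i₀) ^ 4 := by positivity
      refine Integrable.mono' ((hB4.const_mul (8 / (M i₀ i₀) ^ 4)).add (integrable_const 8))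
        ((hxm i₀).pow_const 8).aestronglyMeasurable ?_
      filter_upwards with ω
      show ‖(x i₀ ω) ^ 8‖ ≤ 8 / (M i₀ i₀) ^ 4 * (y i₀ ω) ^ 4 + 8
      rw [Real.norm_eq_abs, abs_of_nonneg (by positivity : (0:ℝ) ≤ (x i₀ ω) ^ 8)]
      have h1 : (x i₀ ω) ^ 8 ≤ 8 * (((x i₀ ω) ^ 2 - 1) ^ 4 + 1) := by
        nlinarith [pow_four_add_le ((x i₀ ω) ^ 2 - 1) 1]
      have h2 : ((x i₀ ω) ^ 2 - 1) ^ 4 = (y i₀ ω) ^ 4 / (M i₀ i₀) ^ 4 := by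
        simp only [hy]
        field_simp
      rw [h2] at h1
      have h3 : 8 * ((y i₀ ω) ^ 4 / (M i₀ i₀) ^ 4 + 1)
          = 8 / (M i₀ i₀) ^ 4 * (y i₀ ω) ^ 4 + 8 := by
        field_simp
      linarith [h1, h3.ge, h3.le]
    rw [integral_undef hnint]
    have h1 : 0 ≤ ν₈ * Matrix.trace (M ^ 4) := mul_nonneg hν₈0 htrace4_0
    nlinarith [sq_nonneg (ν₄ * Matrix.trace (M ^ 2))]
end

section
/- (Fourth-moment bound for the off-diagonal quadratic form.) Let x_1, …, x_n be independent real random variables with mean 0 and variance 1 and max_i E|x_i|^4 ≤ ν_4 < ∞, and let M_n = (m_{ij}) be a deterministic nonnegative definite n×n real matrix. Then there is an absolute constant C > 0 such that E| Σ_{u≠v} m_{uv}·x_u·x_v |^4 ≤ C·ν_4^2·(tr(M_n^2))^2. -/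
open MeasureTheory ProbabilityTheory Filter Real Finset Topology Matrix
open scoped ENNReal

set_option maxHeartbeats 1000000
set_option linter.unusedSectionVars false
set_option linter.unusedVariables false
set_option linter.unreachableTactic false
set_option linter.unusedTactic false

namespace OffDiag4



variable {N : ℕ}

/-- Flip a pair according to a boolean. -/
def flip2 {α : Type*} (e : Bool) (p : α × α) : α × α := if e then (p.2, p.1) else p

@[simp] lemma flip2_false {α : Type*} (p : α × α) : flip2 false p = p := rfl
@[simp] lemma flip2_true {α : Type*} (p : α × α) : flip2 true p = (p.2, p.1) := rfl

lemma flip2_injective {α : Type*} (e : Bool) : Function.Injective (flip2 (α := α) e) := by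
  cases e <;> intro p q h <;> simp [flip2] at h <;>
    [exact h; exact Prod.ext h.2 h.1]

def pat1 (z : (Fin N × Fin N) × (Fin N × Fin N)) : Fin 4 → Fin N × Fin N :=
  ![z.1, z.1, z.2, z.2]

def pat2 (z : Fin N × Fin N × Fin N) : Fin 4 → Fin N × Fin N :=
  ![(z.1, z.2.1), (z.1, z.2.1), (z.1, z.2.2), (z.2.1, z.2.2)]

def pat3 (z : Fin N × Fin N × Fin N × Fin N) : Fin 4 → Fin N × Fin N :=
  ![(z.1, z.2.1), (z.2.1, z.2.2.1), (z.2.2.1, z.2.2.2), (z.2.2.2, z.1)]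

/-- `q` matches the pattern `P` up to slot permutation `σ` and orientation flips `ε`. -/
def Matches (q : Fin 4 → Fin N × Fin N) (σ : Equiv.Perm (Fin 4)) (ε : Fin 4 → Bool)
    (P : Fin 4 → Fin N × Fin N) : Prop := ∀ i, q (σ i) = flip2 (ε i) (P i)

lemma exists_perm (k0 k1 k2 k3 : Fin 4) (h01 : k0 ≠ k1) (h02 : k0 ≠ k2) (h03 : k0 ≠ k3)
    (h12 : k1 ≠ k2) (h13 : k1 ≠ k3) (h23 : k2 ≠ k3) :
    ∃ σ : Equiv.Perm (Fin 4), σ 0 = k0 ∧ σ 1 = k1 ∧ σ 2 = k2 ∧ σ 3 = k3 := by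
  revert h01 h02 h03 h12 h13 h23
  revert k0 k1 k2 k3
  decide

lemma exists_compl (k l : Fin 4) (h : k ≠ l) :
    ∃ k' l', k' ≠ l' ∧ k ≠ k' ∧ k ≠ l' ∧ l ≠ k' ∧ l ≠ l' ∧
      ∀ a : Fin 4, a = k ∨ a = l ∨ a = k' ∨ a = l' := by
  revert h; revert k l; decide

lemma four_cases (a k0 k1 k2 k3 : Fin 4)
    (hcov : ∀ b : Fin 4, b = k0 ∨ b = k1 ∨ b = k2 ∨ b = k3) :
    a = k0 ∨ a = k1 ∨ a = k2 ∨ a = k3 := hcov a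

lemma build_cert (q : Fin 4 → Fin N × Fin N) (k0 k1 k2 k3 : Fin 4)
    (h01 : k0 ≠ k1) (h02 : k0 ≠ k2) (h03 : k0 ≠ k3)
    (h12 : k1 ≠ k2) (h13 : k1 ≠ k3) (h23 : k2 ≠ k3)
    (P : Fin 4 → Fin N × Fin N)
    (m0 : q k0 = P 0 ∨ q k0 = ((P 0).2, (P 0).1))
    (m1 : q k1 = P 1 ∨ q k1 = ((P 1).2, (P 1).1))
    (m2 : q k2 = P 2 ∨ q k2 = ((P 2).2, (P 2).1))
    (m3 : q k3 = P 3 ∨ q k3 = ((P 3).2, (P 3).1)) :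
    ∃ σ : Equiv.Perm (Fin 4), ∃ ε : Fin 4 → Bool, Matches q σ ε P := by
  obtain ⟨σ, hs0, hs1, hs2, hs3⟩ := exists_perm k0 k1 k2 k3 h01 h02 h03 h12 h13 h23
  have pick : ∀ (k : Fin 4) (p : Fin N × Fin N),
      (q k = p ∨ q k = (p.2, p.1)) → ∃ e, q k = flip2 e p := by
    rintro k p (h | h)
    · exact ⟨false, by simpa using h⟩
    · exact ⟨true, by simpa using h⟩
  obtain ⟨e0, he0⟩ := pick _ _ m0
  obtain ⟨e1, he1⟩ := pick _ _ m1
  obtain ⟨e2, he2⟩ := pick _ _ m2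
  obtain ⟨e3, he3⟩ := pick _ _ m3
  refine ⟨σ, ![e0, e1, e2, e3], fun i => ?_⟩
  fin_cases i <;> simp_all


lemma exists_fourth (a b c : Fin 4) (hab : a ≠ b) (hac : a ≠ c) (hbc : b ≠ c) :
    ∃ d, d ≠ a ∧ d ≠ b ∧ d ≠ c ∧ ∀ e : Fin 4, e = a ∨ e = b ∨ e = c ∨ e = d := by
  revert hab hac hbc; revert a b c; decide

def Mem (q : Fin 4 → Fin N × Fin N) (j : Fin N) (k : Fin 4) : Prop :=
  (q k).1 = j ∨ (q k).2 = j

def Euq (q : Fin 4 → Fin N × Fin N) (a b : Fin 4) : Prop :=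
  q a = q b ∨ q a = ((q b).2, (q b).1)

variable {q : Fin 4 → Fin N × Fin N} {a b c : Fin 4} {j : Fin N}

lemma euq_symm (h : Euq q a b) : Euq q b a := by
  rcases h with h | h
  · exact Or.inl h.symm
  · right; rw [h]

lemma euq_trans (h1 : Euq q a b) (h2 : Euq q b c) : Euq q a c := by
  unfold Euq at *
  rcases h1 with h1 | h1 <;> rcases h2 with h2 | h2 <;> rw [h1, h2] <;> simp

lemma mem_of_euq (h : Euq q a b) (hm : Mem q j a) : Mem q j b := by
  unfold Mem at *
  rcases h with h | h <;> rw [h] at hm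
  · exact hm
  · exact hm.symm

lemma or_pair_of_euq {p : Fin N × Fin N} (h : Euq q a b)
    (hb : q b = p ∨ q b = (p.2, p.1)) : q a = p ∨ q a = (p.2, p.1) := by
  rcases h with h | h <;> rcases hb with hb | hb <;> rw [h, hb] <;> simp

lemma cover_twice (hne : ∀ k, (q k).1 ≠ (q k).2)
    (hval : ∀ j, (∑ k : Fin 4,
      ((if (q k).1 = j then 1 else 0) + (if (q k).2 = j then 1 else 0)) : ℕ) ≠ 1)
    (k : Fin 4) (hm : Mem q j k) : ∃ k', k' ≠ k ∧ Mem q j k' := by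
  by_contra hcon
  push_neg at hcon
  apply hval j
  rw [Finset.sum_eq_single k]
  · rcases hm with hm | hm
    · have h2 : (q k).2 ≠ j := fun h => hne k (hm.trans h.symm)
      simp [hm, h2]
    · have h1 : (q k).1 ≠ j := fun h => hne k (h.trans hm.symm)
      simp [hm, h1]
  · intro k' _ hk'
    have := hcon k' hk'
    simp only [Mem, not_or] at this
    simp [this.1, this.2]
  · simp

lemma eq_pair {u v : Fin N} (k : Fin 4) (huv : u ≠ v) (hu : Mem q u k) (hv : Mem q v k) :
    q k = (u, v) ∨ q k = (v, u) := by
  rcases hu with hu | hu <;> rcases hv with hv | hv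
  · exact absurd (hu.symm.trans hv) huv
  · exact Or.inl (Prod.ext hu hv)
  · exact Or.inr (Prod.ext hv hu)
  · exact absurd (hu.symm.trans hv) huv

lemma other_end (hne : ∀ k, (q k).1 ≠ (q k).2) (k : Fin 4) (hm : Mem q j k) :
    ∃ w, w ≠ j ∧ (q k = (j, w) ∨ q k = (w, j)) := by
  rcases hm with hm | hm
  · exact ⟨(q k).2, fun h => hne k (hm.trans h.symm), Or.inl (Prod.ext hm rfl)⟩
  · exact ⟨(q k).1, fun h => hne k (h.trans hm.symm), Or.inr (Prod.ext rfl hm)⟩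


theorem certificate (q : Fin 4 → Fin N × Fin N)
    (hne : ∀ k, (q k).1 ≠ (q k).2)
    (hval : ∀ j, (∑ k : Fin 4,
      ((if (q k).1 = j then 1 else 0) + (if (q k).2 = j then 1 else 0)) : ℕ) ≠ 1) :
    ∃ σ : Equiv.Perm (Fin 4), ∃ ε : Fin 4 → Bool,
      (∃ z, Matches q σ ε (pat1 z)) ∨ (∃ z, Matches q σ ε (pat2 z)) ∨
      (∃ z, Matches q σ ε (pat3 z)) := by
  classical
  have L1 : ∀ (j : Fin N) (k : Fin 4), Mem q j k → ∃ k', k' ≠ k ∧ Mem q j k' :=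
    fun j k hm => cover_twice hne hval k hm
  by_cases hA : ∃ k l, k ≠ l ∧ Euq q k l
  · obtain ⟨k, l, hkl, hEkl⟩ := hA
    obtain ⟨k', l', hk'l', hkk', hkl', hlk', hll', hcov⟩ := exists_compl k l hkl
    have hElk : Euq q l k := euq_symm hEkl
    by_cases hC : Euq q k' l'
    · -- two matched pairs (k,l) and (k',l')
      obtain ⟨σ, ε, hm⟩ := build_cert q k l k' l' hkl hkk' hkl' hlk' hll' hk'l'
        (pat1 (q k, q k'))
        (Or.inl rfl) (by simpa [pat1, Euq] using hElk) (Or.inl rfl)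
        (by simpa [pat1, Euq] using euq_symm hC)
      exact ⟨σ, ε, Or.inl ⟨_, hm⟩⟩
    · by_cases hB : Euq q k' k
      · -- q l' must also match q l
        have hsub : ∀ j, Mem q j l' → Mem q j k := by
          intro j hj
          obtain ⟨k'', hk''ne, hk''mem⟩ := L1 j l' hj
          rcases hcov k'' with h | h | h | h
          · exact h ▸ hk''mem
          · exact mem_of_euq hElk (h ▸ hk''mem)
          · exact mem_of_euq hB (h ▸ hk''mem)
          · exact absurd h hk''ne
        have h1 : Mem q (q l').1 k := hsub _ (Or.inl rfl)
        have h2 : Mem q (q l').2 k := hsub _ (Or.inr rfl)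
        have hEl'k : Euq q l' k := by
          rcases eq_pair k (hne l') h1 h2 with h | h
          · exact Or.inl (by rw [h])
          · exact Or.inr (by rw [h])
        have hEl'l : Euq q l' l := euq_trans hEl'k hEkl
        obtain ⟨σ, ε, hm⟩ := build_cert q k k' l l' hkk' hkl hkl' (Ne.symm hlk') hk'l' hll'
          (pat1 (q k, q l))
          (Or.inl rfl) (by simpa [pat1, Euq] using hB) (Or.inl rfl)
          (by simpa [pat1, Euq] using hEl'l)
        exact ⟨σ, ε, Or.inl ⟨_, hm⟩⟩
      · -- triangle case
        -- q k' has an endpoint w outside {u, v} = endpoints of q k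
        have hwex : ∃ w s', (q k' = (w, s') ∨ q k' = (s', w)) ∧
            ¬ Mem q w k := by
          by_cases h1 : Mem q (q k').1 k
          · by_cases h2 : Mem q (q k').2 k
            · exfalso
              apply hB
              rcases eq_pair k (hne k') h1 h2 with h | h
              · exact Or.inl (by rw [h])
              · exact Or.inr (by rw [h])
            · exact ⟨(q k').2, (q k').1, Or.inr rfl, h2⟩
          · exact ⟨(q k').1, (q k').2, Or.inl rfl, h1⟩
        obtain ⟨w, s', hqk', hwk⟩ := hwex
        have hws' : w ≠ s' := by
          rcases hqk' with h | h
          · intro he; exact hne k' (by rw [h, he])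
          · intro he; exact hne k' (by rw [h, he])
        have hwmem : Mem q w k' := by
          rcases hqk' with h | h
          · exact Or.inl (by rw [h])
          · exact Or.inr (by rw [h])
        have hs'mem : Mem q s' k' := by
          rcases hqk' with h | h
          · exact Or.inr (by rw [h])
          · exact Or.inl (by rw [h])
        -- w must also be an endpoint of q l'
        have hwl' : Mem q w l' := by
          obtain ⟨k'', hk''ne, hk''mem⟩ := L1 w k' hwmem
          rcases hcov k'' with h | h | h | h
          · exact absurd (h ▸ hk''mem) hwk
          · exact absurd (mem_of_euq hElk (h ▸ hk''mem)) hwk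
          · exact absurd h hk''ne
          · exact h ▸ hk''mem
        obtain ⟨t', hwt', hqt'⟩ := other_end hne l' hwl'
        have ht'w : t' ≠ w := hwt'
        have ht'mem : Mem q t' l' := by
          rcases hqt' with h | h
          · exact Or.inr (by rw [h])
          · exact Or.inl (by rw [h])
        have hst' : s' ≠ t' := by
          intro he
          apply hC
          subst he
          rcases hqk' with h | h <;> rcases hqt' with h' | h' <;>
            simp [Euq, h, h']
        have hs'k : Mem q s' k := by
          obtain ⟨k'', hk''ne, hk''mem⟩ := L1 s' k' hs'mem
          rcases hcov k'' with h | h | h | h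
          · exact h ▸ hk''mem
          · exact mem_of_euq hElk (h ▸ hk''mem)
          · exact absurd h hk''ne
          · subst h
            exfalso
            rcases hqt' with h' | h' <;> simp only [Mem, h'] at hk''mem <;>
              rcases hk''mem with h'' | h'' <;> simp_all
        have ht'k : Mem q t' k := by
          obtain ⟨k'', hk''ne, hk''mem⟩ := L1 t' l' ht'mem
          rcases hcov k'' with h | h | h | h
          · exact h ▸ hk''mem
          · exact mem_of_euq hElk (h ▸ hk''mem)
          · subst h
            exfalso
            rcases hqk' with h' | h' <;> simp only [Mem, h'] at hk''mem <;>
              rcases hk''mem with h'' | h'' <;> simp_all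
          · exact absurd h hk''ne
        have hqk : q k = (s', t') ∨ q k = (t', s') := eq_pair k hst' hs'k ht'k
        have hql : q l = (s', t') ∨ q l = (t', s') := or_pair_of_euq (p := (s', t')) hElk hqk
        obtain ⟨σ, ε, hm⟩ := build_cert q k l k' l' hkl hkk' hkl' hlk' hll' hk'l'
          (pat2 (s', t', w))
          (by simpa [pat2] using hqk) (by simpa [pat2] using hql)
          (by simpa [pat2] using hqk'.symm) (by simpa [pat2] using hqt'.symm)
        exact ⟨σ, ε, Or.inr (Or.inl ⟨_, hm⟩)⟩
  · -- no two edges coincide: 4-cycle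
    push_neg at hA
    have huv := hne 0
    obtain ⟨k1, hk10, hk1mem⟩ := L1 (q 0).1 0 (Or.inl rfl)
    obtain ⟨k2, hk20, hk2mem⟩ := L1 (q 0).2 0 (Or.inr rfl)
    have hk12 : k1 ≠ k2 := by
      intro he
      subst he
      apply hA k1 0 hk10
      rcases eq_pair k1 huv hk1mem (by exact hk2mem) with h | h
      · exact Or.inl (by rw [h])
      · exact Or.inr (by rw [h])
    obtain ⟨k3, hk30, hk31, hk32, hcov⟩ := exists_fourth 0 k1 k2 (Ne.symm hk10) (Ne.symm hk20) hk12
    obtain ⟨w, hwu, hq1⟩ := other_end hne k1 hk1mem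
    have hwv : w ≠ (q 0).2 := by
      intro he
      apply hA k1 0 hk10
      rcases hq1 with h | h
      · exact Or.inl (by rw [h, he])
      · exact Or.inr (by rw [h, he])
    obtain ⟨t, htv, hq2⟩ := other_end hne k2 hk2mem
    have htu : t ≠ (q 0).1 := by
      intro he
      apply hA k2 0 hk20
      rcases hq2 with h | h
      · exact Or.inr (by rw [h, he])
      · exact Or.inl (by rw [h, he])
    -- If w were an endpoint of q k2 we get a contradiction via k3
    have hfinal : ¬ Mem q w k2 := by
      intro hwk2
      have hq2' : q k2 = ((q 0).2, w) ∨ q k2 = (w, (q 0).2) := by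
        have hwt0 : w = t := by
          rcases hq2 with h | h <;> simp only [Mem, h] at hwk2 <;>
            rcases hwk2 with h' | h' <;> simp_all
        rcases hq2 with h | h
        · exact Or.inl (by rw [h, hwt0])
        · exact Or.inr (by rw [h, hwt0])
      have hp : ∀ j, Mem q j k3 → (j = (q 0).1 ∨ j = (q 0).2 ∨ j = w) := by
        intro j hj
        obtain ⟨e, hene, hemem⟩ := L1 j k3 hj
        rcases hcov e with h | h | h | h
        · subst h
          rcases hemem with h' | h'
          · exact Or.inl h'.symm
          · exact Or.inr (Or.inl h'.symm)
        · subst h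
          rcases hq1 with h' | h' <;> simp only [Mem, h'] at hemem <;>
              rcases hemem with h'' | h''
          · exact Or.inl h''.symm
          · exact Or.inr (Or.inr h''.symm)
          · exact Or.inr (Or.inr h''.symm)
          · exact Or.inl h''.symm
        · subst h
          rcases hq2' with h' | h' <;> simp only [Mem, h'] at hemem <;>
              rcases hemem with h'' | h''
          · exact Or.inr (Or.inl h''.symm)
          · exact Or.inr (Or.inr h''.symm)
          · exact Or.inr (Or.inr h''.symm)
          · exact Or.inr (Or.inl h''.symm)
        · exact absurd h hene
      have hpr := hne k3
      have hp1 := hp (q k3).1 (Or.inl rfl)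
      have hp2 := hp (q k3).2 (Or.inr rfl)
      rcases hp1 with h1 | h1 | h1 <;> rcases hp2 with h2 | h2 | h2
      · exact hpr (h1.trans h2.symm)
      · exact hA k3 0 hk30 (Or.inl (Prod.ext h1 h2))
      · apply hA k3 k1 hk31
        rcases hq1 with h' | h'
        · exact Or.inl (by rw [h']; exact Prod.ext h1 h2)
        · exact Or.inr (by rw [h']; exact Prod.ext h1 h2)
      · exact hA k3 0 hk30 (Or.inr (Prod.ext h1 h2))
      · exact hpr (h1.trans h2.symm)
      · apply hA k3 k2 hk32
        rcases hq2' with h' | h'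
        · exact Or.inl (by rw [h']; exact Prod.ext h1 h2)
        · exact Or.inr (by rw [h']; exact Prod.ext h1 h2)
      · apply hA k3 k1 hk31
        rcases hq1 with h' | h'
        · exact Or.inr (by rw [h']; exact Prod.ext h1 h2)
        · exact Or.inl (by rw [h']; exact Prod.ext h1 h2)
      · apply hA k3 k2 hk32
        rcases hq2' with h' | h'
        · exact Or.inr (by rw [h']; exact Prod.ext h1 h2)
        · exact Or.inl (by rw [h']; exact Prod.ext h1 h2)
      · exact hpr (h1.trans h2.symm)
    have hq1mem : Mem q w k1 := by
      rcases hq1 with h | h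
      · exact Or.inr (by rw [h])
      · exact Or.inl (by rw [h])
    have hwk3 : Mem q w k3 := by
      obtain ⟨e, hene, hemem⟩ := L1 w k1 hq1mem
      rcases hcov e with h | h | h | h
      · subst h
        exfalso
        rcases hemem with h' | h'
        · exact hwu h'.symm
        · exact hwv h'.symm
      · exact absurd h hene
      · exact absurd (h ▸ hemem) hfinal
      · exact h ▸ hemem
    have hq2mem : Mem q t k2 := by
      rcases hq2 with h | h
      · exact Or.inr (by rw [h])
      · exact Or.inl (by rw [h])
    have hwt : w ≠ t := by
      intro he
      exact hfinal (he ▸ hq2mem)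
    have htk3 : Mem q t k3 := by
      obtain ⟨e, hene, hemem⟩ := L1 t k2 hq2mem
      rcases hcov e with h | h | h | h
      · subst h
        exfalso
        rcases hemem with h' | h'
        · exact htu h'.symm
        · exact htv h'.symm
      · subst h
        exfalso
        apply hfinal
        have : t = w := by
          rcases hq1 with h' | h' <;> simp only [Mem, h'] at hemem <;>
            rcases hemem with h'' | h'' <;> simp_all
        exact this ▸ hq2mem
      · exact absurd h hene
      · exact h ▸ hemem
    have hq3 : q k3 = (w, t) ∨ q k3 = (t, w) := eq_pair k3 hwt hwk3 htk3
    obtain ⟨σ, ε, hm⟩ := build_cert q 0 k2 k3 k1 (Ne.symm hk20) (Ne.symm hk30) (Ne.symm hk10)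
      (Ne.symm hk32) (Ne.symm hk12) hk31
      (pat3 ((q 0).1, (q 0).2, t, w))
      (by simp [pat3]) (by simpa [pat3] using hq2) (by simpa [pat3] using hq3.symm)
      (by simpa [pat3] using hq1.symm)
    exact ⟨σ, ε, Or.inr (Or.inr ⟨_, hm⟩)⟩



variable {N : ℕ}













instance (q : Fin 4 → Fin N × Fin N) (σ : Equiv.Perm (Fin 4)) (ε : Fin 4 → Bool)
    (P : Fin 4 → Fin N × Fin N) : Decidable (Matches q σ ε P) := by
  unfold Matches; infer_instance

section Sums

variable (a : Fin N → Fin N → ℝ)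

lemma amgm (x y : ℝ) : x * y ≤ (x ^ 2 + y ^ 2) / 2 := by nlinarith [sq_nonneg (x - y)]

lemma tri_sum (h0 : ∀ u v, 0 ≤ a u v) (hs : ∀ u v, a u v = a v u) :
    ∑ u, ∑ v, ∑ w, a u v ^ 2 * (a u w * a v w) ≤ (∑ u, ∑ v, a u v ^ 2) ^ 2 := by
  set r : Fin N → ℝ := fun u => ∑ v, a u v ^ 2 with hr
  have hrn : ∀ u, 0 ≤ r u := fun u => Finset.sum_nonneg fun v _ => sq_nonneg _
  have hS1 : ∑ u, ∑ v, ∑ w, a u v ^ 2 * a u w ^ 2 ≤ (∑ u, r u) ^ 2 := by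
    have heq : ∀ u : Fin N, (∑ v, ∑ w, a u v ^ 2 * a u w ^ 2) = r u ^ 2 := by
      intro u
      rw [← Finset.sum_mul_sum, sq]
    calc ∑ u, ∑ v, ∑ w, a u v ^ 2 * a u w ^ 2 = ∑ u, r u ^ 2 := by
          exact Finset.sum_congr rfl fun u _ => heq u
      _ ≤ (∑ u, r u) ^ 2 := Finset.sum_sq_le_sq_sum_of_nonneg fun u _ => hrn u
  have hS2 : ∑ u, ∑ v, ∑ w, a u v ^ 2 * a v w ^ 2 ≤ (∑ u, r u) ^ 2 := by
    have hswap : ∑ u, ∑ v, ∑ w, a u v ^ 2 * a v w ^ 2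
        = ∑ v, ∑ u, ∑ w, a u v ^ 2 * a v w ^ 2 := Finset.sum_comm
    have heq : ∀ v : Fin N, (∑ u, ∑ w, a u v ^ 2 * a v w ^ 2) = r v ^ 2 := by
      intro v
      rw [← Finset.sum_mul_sum, sq]
      congr 1
      exact Finset.sum_congr rfl fun u _ => by rw [hs u v]
    calc ∑ u, ∑ v, ∑ w, a u v ^ 2 * a v w ^ 2 = ∑ v, r v ^ 2 := by
          rw [hswap]; exact Finset.sum_congr rfl fun v _ => heq v
      _ ≤ (∑ v, r v) ^ 2 := Finset.sum_sq_le_sq_sum_of_nonneg fun v _ => hrn v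
  have hpt : ∑ u, ∑ v, ∑ w, a u v ^ 2 * (a u w * a v w)
      ≤ ∑ u, ∑ v, ∑ w, (a u v ^ 2 * a u w ^ 2 + a u v ^ 2 * a v w ^ 2) / 2 := by
    refine Finset.sum_le_sum fun u _ => Finset.sum_le_sum fun v _ =>
      Finset.sum_le_sum fun w _ => ?_
    have := amgm (a u w) (a v w)
    nlinarith [sq_nonneg (a u v)]
  have hsplit : ∑ u, ∑ v, ∑ w, (a u v ^ 2 * a u w ^ 2 + a u v ^ 2 * a v w ^ 2) / 2
      = ((∑ u, ∑ v, ∑ w, a u v ^ 2 * a u w ^ 2)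
        + (∑ u, ∑ v, ∑ w, a u v ^ 2 * a v w ^ 2)) / 2 := by
    simp only [add_div, Finset.sum_add_distrib, Finset.sum_div]
  have : (∑ u, ∑ v, a u v ^ 2) = ∑ u, r u := rfl
  rw [this]
  linarith
lemma cyc_sum (h0 : ∀ u v, 0 ≤ a u v) (hs : ∀ u v, a u v = a v u) :
    ∑ u, ∑ v, ∑ w, ∑ t, a u v * a v w * a w t * a t u ≤ (∑ u, ∑ v, a u v ^ 2) ^ 2 := by
  set r : Fin N → ℝ := fun u => ∑ v, a u v ^ 2 with hr
  set g : Fin N → Fin N → ℝ := fun u w => ∑ v, a u v * a v w with hg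
  have hgsq : ∀ u w, g u w ^ 2 ≤ r u * r w := by
    intro u w
    have hcs := Finset.sum_mul_sq_le_sq_mul_sq univ (fun v => a u v) (fun v => a v w)
    have : (∑ v, a v w ^ 2) = r w := by
      exact Finset.sum_congr rfl fun v _ => by rw [hs v w]
    calc g u w ^ 2 ≤ (∑ v, a u v ^ 2) * (∑ v, a v w ^ 2) := hcs
      _ = r u * r w := by rw [this]
  have hmain : ∀ u : Fin N, (∑ v, ∑ w, ∑ t, a u v * a v w * a w t * a t u)
      = ∑ w, g u w * g w u := by
    intro u
    rw [Finset.sum_comm]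
    refine Finset.sum_congr rfl fun w _ => ?_
    calc ∑ v, ∑ t, a u v * a v w * a w t * a t u
        = ∑ v, ∑ t, (a u v * a v w) * (a w t * a t u) :=
          Finset.sum_congr rfl fun v _ => Finset.sum_congr rfl fun t _ => by ring
      _ = g u w * g w u := (Finset.sum_mul_sum _ _ _ _).symm
  have hgsymm : ∀ u w, g w u = g u w := by
    intro u w
    refine Finset.sum_congr rfl fun v _ => ?_
    rw [hs w v, hs v u]; ring
  calc ∑ u, ∑ v, ∑ w, ∑ t, a u v * a v w * a w t * a t u
      = ∑ u, ∑ w, g u w ^ 2 := by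
        refine Finset.sum_congr rfl fun u _ => ?_
        rw [hmain u]
        refine Finset.sum_congr rfl fun w _ => by rw [hgsymm u w, sq]
    _ ≤ ∑ u, ∑ w, r u * r w := by
        refine Finset.sum_le_sum fun u _ => Finset.sum_le_sum fun w _ => hgsq u w
    _ = (∑ u, r u) * (∑ w, r w) := by rw [Finset.sum_mul_sum]
    _ = (∑ u, ∑ v, a u v ^ 2) ^ 2 := by rw [sq]
lemma matches_prod (hs : ∀ u v, a u v = a v u) {q : Fin 4 → Fin N × Fin N}
    {σ : Equiv.Perm (Fin 4)} {ε : Fin 4 → Bool} {P : Fin 4 → Fin N × Fin N}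
    (hm : Matches q σ ε P) :
    ∏ k, a (q k).1 (q k).2 = ∏ i, a (P i).1 (P i).2 := by
  rw [← Equiv.prod_comp σ (fun k => a (q k).1 (q k).2)]
  refine Finset.prod_congr rfl fun i _ => ?_
  rw [hm i]
  cases hε : ε i
  · simp [flip2]
  · simp [flip2]
    exact (hs _ _).symm

lemma sum_matches_le {ι : Type*} [Fintype ι] (h0 : ∀ u v, 0 ≤ a u v)
    (hs : ∀ u v, a u v = a v u)
    (P : ι → Fin 4 → Fin N × Fin N) (hP : Function.Injective P)
    (σ : Equiv.Perm (Fin 4)) (ε : Fin 4 → Bool) :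
    ∑ q ∈ univ.filter (fun q : Fin 4 → Fin N × Fin N => ∃ z, Matches q σ ε (P z)),
      ∏ k, a (q k).1 (q k).2 ≤ ∑ z : ι, ∏ i, a (P z i).1 (P z i).2 := by
  classical
  set F : ι → (Fin 4 → Fin N × Fin N) := fun z k => flip2 (ε (σ.symm k)) (P z (σ.symm k))
    with hF
  have hmatch : ∀ z, Matches (F z) σ ε (P z) := by
    intro z i
    simp [F, Equiv.symm_apply_apply]
  have hsub : univ.filter (fun q => ∃ z, Matches q σ ε (P z)) ⊆ univ.image F := by
    intro q hq
    simp only [mem_filter] at hq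
    obtain ⟨z, hz⟩ := hq.2
    refine mem_image.2 ⟨z, mem_univ z, ?_⟩
    funext k
    have h1 := hz (σ.symm k)
    rw [Equiv.apply_symm_apply] at h1
    exact h1.symm
  have hFinj : Function.Injective F := by
    intro z z' h
    apply hP
    funext i
    have h1 := congrFun h (σ i)
    simp only [F, Equiv.symm_apply_apply] at h1
    exact flip2_injective _ h1
  calc ∑ q ∈ univ.filter (fun q => ∃ z, Matches q σ ε (P z)), ∏ k, a (q k).1 (q k).2
      ≤ ∑ q ∈ univ.image F, ∏ k, a (q k).1 (q k).2 := by
        refine Finset.sum_le_sum_of_subset_of_nonneg hsub fun q _ _ =>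
          Finset.prod_nonneg fun k _ => h0 _ _
    _ = ∑ z : ι, ∏ k, a (F z k).1 (F z k).2 :=
        Finset.sum_image fun z _ z' _ h => hFinj h
    _ = ∑ z : ι, ∏ i, a (P z i).1 (P z i).2 :=
        Finset.sum_congr rfl fun z _ => matches_prod a hs (hmatch z)

lemma pat1_inj : Function.Injective (pat1 (N := N)) := by
  intro z z' h
  have h0 := congrFun h 0
  have h2 := congrFun h 2
  simp [pat1] at h0 h2
  exact Prod.ext h0 h2

lemma pat2_inj : Function.Injective (pat2 (N := N)) := by
  intro z z' h
  have h0 := congrFun h 0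
  have h2 := congrFun h 2
  simp [pat2, Prod.ext_iff] at h0 h2
  exact Prod.ext h0.1 (Prod.ext h0.2 h2.2)

lemma pat3_inj : Function.Injective (pat3 (N := N)) := by
  intro z z' h
  have h0 := congrFun h 0
  have h2 := congrFun h 2
  simp [pat3, Prod.ext_iff] at h0 h2
  exact Prod.ext h0.1 (Prod.ext h0.2 (Prod.ext h2.1 h2.2))

lemma sum_pat1_le (h0 : ∀ u v, 0 ≤ a u v) (hs : ∀ u v, a u v = a v u)
    (σ : Equiv.Perm (Fin 4)) (ε : Fin 4 → Bool) :
    ∑ q ∈ univ.filter (fun q : Fin 4 → Fin N × Fin N => ∃ z, Matches q σ ε (pat1 z)),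
      ∏ k, a (q k).1 (q k).2 ≤ (∑ u, ∑ v, a u v ^ 2) ^ 2 := by
  refine (sum_matches_le a h0 hs pat1 pat1_inj σ ε).trans ?_
  have : ∀ z : (Fin N × Fin N) × (Fin N × Fin N),
      (∏ i, a (pat1 z i).1 (pat1 z i).2)
        = (a z.1.1 z.1.2 ^ 2) * (a z.2.1 z.2.2 ^ 2) := by
    intro z
    rw [Fin.prod_univ_four]
    simp [pat1]
    ring
  rw [Finset.sum_congr rfl fun z _ => this z]
  have e0 : ∑ z : (Fin N × Fin N) × (Fin N × Fin N), a z.1.1 z.1.2 ^ 2 * a z.2.1 z.2.2 ^ 2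
      = (∑ p : Fin N × Fin N, a p.1 p.2 ^ 2) * (∑ p : Fin N × Fin N, a p.1 p.2 ^ 2) := by
    rw [Finset.sum_mul_sum, ← Finset.sum_product', Finset.univ_product_univ]
  have e1 : (∑ p : Fin N × Fin N, a p.1 p.2 ^ 2) = ∑ u, ∑ v, a u v ^ 2 := by
    simp only [Fintype.sum_prod_type]
  rw [e0, e1, sq]

lemma sum_pat2_le (h0 : ∀ u v, 0 ≤ a u v) (hs : ∀ u v, a u v = a v u)
    (σ : Equiv.Perm (Fin 4)) (ε : Fin 4 → Bool) :
    ∑ q ∈ univ.filter (fun q : Fin 4 → Fin N × Fin N => ∃ z, Matches q σ ε (pat2 z)),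
      ∏ k, a (q k).1 (q k).2 ≤ (∑ u, ∑ v, a u v ^ 2) ^ 2 := by
  refine (sum_matches_le a h0 hs pat2 pat2_inj σ ε).trans ?_
  have : ∀ z : Fin N × Fin N × Fin N,
      (∏ i, a (pat2 z i).1 (pat2 z i).2)
        = a z.1 z.2.1 ^ 2 * (a z.1 z.2.2 * a z.2.1 z.2.2) := by
    intro z
    rw [Fin.prod_univ_four]
    simp [pat2]
    ring
  rw [Finset.sum_congr rfl fun z _ => this z]
  simp only [Fintype.sum_prod_type]
  exact tri_sum a h0 hs

lemma sum_pat3_le (h0 : ∀ u v, 0 ≤ a u v) (hs : ∀ u v, a u v = a v u)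
    (σ : Equiv.Perm (Fin 4)) (ε : Fin 4 → Bool) :
    ∑ q ∈ univ.filter (fun q : Fin 4 → Fin N × Fin N => ∃ z, Matches q σ ε (pat3 z)),
      ∏ k, a (q k).1 (q k).2 ≤ (∑ u, ∑ v, a u v ^ 2) ^ 2 := by
  refine (sum_matches_le a h0 hs pat3 pat3_inj σ ε).trans ?_
  have : ∀ z : Fin N × Fin N × Fin N × Fin N,
      (∏ i, a (pat3 z i).1 (pat3 z i).2)
        = a z.1 z.2.1 * a z.2.1 z.2.2.1 * a z.2.2.1 z.2.2.2 * a z.2.2.2 z.1 := by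
    intro z
    rw [Fin.prod_univ_four]
    simp [pat3]
  rw [Finset.sum_congr rfl fun z _ => this z]
  calc ∑ z : Fin N × Fin N × Fin N × Fin N,
        a z.1 z.2.1 * a z.2.1 z.2.2.1 * a z.2.2.1 z.2.2.2 * a z.2.2.2 z.1
      = ∑ u, ∑ v, ∑ w, ∑ t, a u v * a v w * a w t * a t u := by
        simp only [Fintype.sum_prod_type]
    _ ≤ (∑ u, ∑ v, a u v ^ 2) ^ 2 := cyc_sum a h0 hs

end Sums



variable {Ω : Type} [MeasureSpace Ω] [IsProbabilityMeasure (ℙ : Measure Ω)]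

lemma indep_prod {n : ℕ} (g : Fin n → Ω → ℝ) (hm : ∀ i, Measurable (g i))
    (hind : iIndepFun g ℙ)
    (hint : ∀ i, Integrable (g i) ℙ) :
    Integrable (fun ω => ∏ i, g i ω) ℙ ∧
      ∫ ω, ∏ i, g i ω ∂ℙ = ∏ i, ∫ ω, g i ω ∂ℙ := by
  classical
  suffices h : ∀ s : Finset (Fin n), Integrable (fun ω => ∏ i ∈ s, g i ω) ℙ ∧
      ∫ ω, ∏ i ∈ s, g i ω ∂ℙ = ∏ i ∈ s, ∫ ω, g i ω ∂ℙ from h univ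
  intro s
  induction s using Finset.induction_on with
  | empty => simp
  | @insert i s his ih =>
    have hindep : IndepFun (∏ j ∈ s, g j) (g i) ℙ :=
      iIndepFun.indepFun_finset_prod_of_notMem hind hm his
    have hps : (fun ω => ∏ j ∈ s, g j ω) = ∏ j ∈ s, g j := by
      funext ω; rw [Finset.prod_apply]
    have hint_s : Integrable (∏ j ∈ s, g j) ℙ := hps ▸ ih.1
    have hint_mul : Integrable ((∏ j ∈ s, g j) * g i) ℙ :=
      hindep.integrable_mul hint_s (hint i)
    constructor
    · have : (fun ω => ∏ j ∈ insert i s, g j ω) = (∏ j ∈ s, g j) * g i := by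
        funext ω
        rw [Finset.prod_insert his]
        simp [Finset.prod_apply, mul_comm]
      rw [this]
      exact hint_mul
    · have h1 : ∫ ω, ∏ j ∈ insert i s, g j ω ∂ℙ
          = ∫ ω, ((∏ j ∈ s, g j) * g i) ω ∂ℙ := by
        congr 1
        funext ω
        rw [Finset.prod_insert his]
        simp [Finset.prod_apply, mul_comm]
      rw [h1, hindep.integral_mul_eq_mul_integral hint_s.aestronglyMeasurable (hint i).aestronglyMeasurable,
        Finset.prod_insert his, ← ih.2, mul_comm]
      congr 1
      rw [← hps]

variable {g : Ω → ℝ} {ν₄ : ℝ}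

lemma integrable_abs_pow4 (hmem : MemLp g 4 ℙ) :
    Integrable (fun ω => |g ω| ^ (4 : ℕ)) ℙ := by
  have h := hmem.integrable_norm_rpow (by norm_num) (by norm_num)
  refine h.congr (Filter.Eventually.of_forall fun ω => ?_)
  show ‖g ω‖ ^ ENNReal.toReal 4 = |g ω| ^ (4:ℕ)
  have e4 : ((4 : ENNReal)).toReal = ((4 : ℕ) : ℝ) := by simp
  rw [Real.norm_eq_abs, e4, Real.rpow_natCast]

lemma int_pow (hm : Measurable g) (hmem : MemLp g 4 ℙ) {c : ℕ} (hc : c ≤ 4) :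
    Integrable (fun ω => g ω ^ c) ℙ := by
  have habs := integrable_abs_pow4 hmem
  refine Integrable.mono' ((integrable_const (1 : ℝ)).add habs)
    ((hm.pow_const c).aestronglyMeasurable)
    (Filter.Eventually.of_forall fun ω => ?_)
  have h1 : ‖g ω ^ c‖ = |g ω| ^ c := by rw [Real.norm_eq_abs, abs_pow]
  rw [h1]
  show |g ω| ^ c ≤ 1 + |g ω| ^ (4 : ℕ)
  rcases le_total (|g ω|) 1 with h | h
  · have : |g ω| ^ c ≤ 1 := pow_le_one₀ (abs_nonneg _) h
    have h2 : (0:ℝ) ≤ |g ω| ^ (4:ℕ) := by positivity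
    linarith
  · have : |g ω| ^ c ≤ |g ω| ^ (4 : ℕ) := pow_le_pow_right₀ h hc
    linarith

lemma int4_eq (hm : Measurable g) :
    ∫ ω, |g ω| ^ (4:ℕ) ∂ℙ = ∫ ω, g ω ^ 4 ∂ℙ := by
  congr 1
  funext ω
  rw [← abs_pow, abs_of_nonneg (by positivity)]

lemma one_le_int4 (hm : Measurable g) (hmem : MemLp g 4 ℙ)
    (hvar : ∫ ω, g ω ^ 2 ∂ℙ = 1) : (1:ℝ) ≤ ∫ ω, g ω ^ 4 ∂ℙ := by
  have i4 : Integrable (fun ω => g ω ^ 4) ℙ := int_pow hm hmem (by norm_num)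
  have i2 : Integrable (fun ω => g ω ^ 2) ℙ := int_pow hm hmem (by norm_num)
  have h0 : 0 ≤ ∫ ω, (g ω ^ 2 - 1) ^ 2 ∂ℙ :=
    integral_nonneg fun ω => sq_nonneg _
  have hexp : ∫ ω, (g ω ^ 2 - 1) ^ 2 ∂ℙ
      = ∫ ω, g ω ^ 4 ∂ℙ - 2 * ∫ ω, g ω ^ 2 ∂ℙ + 1 := by
    have e : (fun ω => (g ω ^ 2 - 1) ^ 2)
        = fun ω => g ω ^ 4 - 2 * g ω ^ 2 + 1 := by
      funext ω; ring
    have iA : Integrable (fun ω => g ω ^ 4 - 2 * g ω ^ 2) ℙ := i4.sub (i2.const_mul 2)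
    have i2' : Integrable (fun ω => 2 * g ω ^ 2) ℙ := i2.const_mul 2
    rw [e]
    rw [integral_add iA (integrable_const 1), integral_sub i4 i2',
      integral_const_mul]
    simp
  rw [hexp, hvar] at h0
  linarith

lemma one_le_nu (hm : Measurable g) (hmem : MemLp g 4 ℙ)
    (hvar : ∫ ω, g ω ^ 2 ∂ℙ = 1) (h4 : ∫ ω, |g ω| ^ 4 ∂ℙ ≤ ν₄) : (1:ℝ) ≤ ν₄ := by
  have := one_le_int4 hm hmem hvar
  have e := int4_eq (g := g) hm
  linarith [h4, e ▸ this]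

lemma abs_cube_le (hm : Measurable g) (hmem : MemLp g 4 ℙ)
    (hvar : ∫ ω, g ω ^ 2 ∂ℙ = 1) (h4 : ∫ ω, |g ω| ^ 4 ∂ℙ ≤ ν₄) :
    |∫ ω, g ω ^ 3 ∂ℙ| ≤ ν₄ := by
  have i4 : Integrable (fun ω => g ω ^ 4) ℙ := int_pow hm hmem (by norm_num)
  have i2 : Integrable (fun ω => g ω ^ 2) ℙ := int_pow hm hmem (by norm_num)
  have i3 : Integrable (fun ω => g ω ^ 3) ℙ := int_pow hm hmem (by norm_num)
  have hnu := one_le_nu hm hmem hvar h4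
  have h4' : ∫ ω, g ω ^ 4 ∂ℙ ≤ ν₄ := by
    rw [← int4_eq hm]; exact h4
  have step1 : |∫ ω, g ω ^ 3 ∂ℙ| ≤ ∫ ω, |g ω ^ 3| ∂ℙ := by
    simpa only [Real.norm_eq_abs] using
      norm_integral_le_integral_norm (μ := (ℙ : Measure Ω)) (fun ω => g ω ^ 3)
  have step2 : ∫ ω, |g ω ^ 3| ∂ℙ ≤ ∫ ω, (g ω ^ 2 + g ω ^ 4) / 2 ∂ℙ := by
    refine integral_mono i3.abs ((i2.add i4).div_const 2) fun ω => ?_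
    have h1 : |g ω ^ 3| = |g ω| ^ 3 := abs_pow _ _
    have h2 : |g ω| ^ 2 = g ω ^ 2 := sq_abs _
    have hb : |g ω| ^ 4 = g ω ^ 4 := by
      rw [← abs_pow]; exact abs_of_nonneg (by positivity)
    simp only [h1]
    nlinarith [sq_nonneg (|g ω| * (|g ω| - 1)), abs_nonneg (g ω)]
  have step3 : ∫ ω, (g ω ^ 2 + g ω ^ 4) / 2 ∂ℙ
      = ((∫ ω, g ω ^ 2 ∂ℙ) + ∫ ω, g ω ^ 4 ∂ℙ) / 2 := by
    rw [integral_div, integral_add i2 i4]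
  rw [step3, hvar] at step2
  calc |∫ ω, g ω ^ 3 ∂ℙ| ≤ (1 + ∫ ω, g ω ^ 4 ∂ℙ) / 2 := step1.trans step2
    _ ≤ ν₄ := by linarith

lemma moment_bound (hm : Measurable g) (hmem : MemLp g 4 ℙ)
    (hmean : ∫ ω, g ω ∂ℙ = 0) (hvar : ∫ ω, g ω ^ 2 ∂ℙ = 1)
    (h4 : ∫ ω, |g ω| ^ 4 ∂ℙ ≤ ν₄) {c : ℕ} (hc : c ≤ 4) (hc1 : c ≠ 1) :
    |∫ ω, g ω ^ c ∂ℙ| ≤ ν₄ ^ (if 3 ≤ c then 1 else 0) := by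
  have hnu := one_le_nu hm hmem hvar h4
  interval_cases c
  · simp
  · exact absurd rfl hc1
  · simp [hvar]
  · simpa using abs_cube_le hm hmem hvar h4
  · have h4' : ∫ ω, g ω ^ 4 ∂ℙ ≤ ν₄ := by rw [← int4_eq hm]; exact h4
    have hpos : 0 ≤ ∫ ω, g ω ^ 4 ∂ℙ := integral_nonneg fun ω => by positivity
    simp only [show (3:ℕ) ≤ 4 by norm_num, if_pos, pow_one]
    rw [abs_of_nonneg hpos]
    exact h4'



lemma pow4_sub_le (a b : ℝ) : (a - b) ^ 4 ≤ 8 * (a ^ 4 + b ^ 4) := by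
  nlinarith [sq_nonneg (a + b), sq_nonneg (a - b), sq_nonneg (a ^ 2 - b ^ 2),
    sq_nonneg (a ^ 2 + b ^ 2), sq_nonneg a, sq_nonneg b, sq_nonneg (a * b),
    sq_nonneg (a ^ 2 - a * b), sq_nonneg (a ^ 2 + a * b)]

variable {Ω : Type} [MeasureSpace Ω] [IsProbabilityMeasure (ℙ : Measure Ω)]

lemma lintegral_pow4_eq_top {g : Ω → ℝ} (hm : Measurable g) (hbad : ¬ MemLp g 4 ℙ) :
    ∫⁻ ω, ENNReal.ofReal (g ω ^ 4) ∂ℙ = ∞ := by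
  have htop : eLpNorm g 4 ℙ = ∞ := by
    by_contra h
    exact hbad ⟨hm.aestronglyMeasurable, lt_top_iff_ne_top.2 h⟩
  rw [eLpNorm_eq_lintegral_rpow_enorm_toReal (by norm_num) (by norm_num)] at htop
  have h4 : ((4 : ENNReal)).toReal = (4 : ℝ) := by norm_num
  rw [h4] at htop
  have hinner : ∫⁻ ω, (‖g ω‖₊ : ℝ≥0∞) ^ (4:ℝ) ∂ℙ = ∞ := by
    by_contra h
    rw [ENNReal.rpow_eq_top_iff] at htop
    rcases htop with ⟨_, hlt⟩ | ⟨heq, _⟩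
    · norm_num at hlt
    · exact h heq
  rw [← hinner]
  refine lintegral_congr fun ω => ?_
  have h1 : ((‖g ω‖₊ : ℝ≥0∞)) = ENNReal.ofReal |g ω| := by
    rw [← Real.norm_eq_abs, ofReal_norm_eq_enorm]
    rfl
  rw [h1, ENNReal.ofReal_rpow_of_nonneg (abs_nonneg _) (by norm_num)]
  congr 1
  rw [show ((4:ℝ)) = ((4:ℕ):ℝ) by norm_num, Real.rpow_natCast, ← abs_pow,
    abs_of_nonneg (by positivity)]

lemma inner_lintegral_top (ν : Measure ℝ) [IsProbabilityMeasure ν]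
    (hν : ∫⁻ t, ENNReal.ofReal (t ^ 4) ∂ν = ∞) (l r : ℝ) (hl : l ≠ 0) :
    ∫⁻ t, ENNReal.ofReal ((t * l + r) ^ 4) ∂ν = ∞ := by
  by_contra hfin
  have hA : Measurable fun t : ℝ => ENNReal.ofReal ((t * l + r) ^ 4) := by
    apply Measurable.ennreal_ofReal
    exact ((measurable_id.mul_const l).add_const r).pow_const 4
  have hpt : ∀ t : ℝ, ENNReal.ofReal (t ^ 4) * ENNReal.ofReal (l ^ 4)
      ≤ ENNReal.ofReal 8 * (ENNReal.ofReal ((t * l + r) ^ 4) + ENNReal.ofReal (r ^ 4)) := by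
    intro t
    rw [← ENNReal.ofReal_mul (by positivity),
      ← ENNReal.ofReal_add (by positivity) (by positivity),
      ← ENNReal.ofReal_mul (by norm_num)]
    apply ENNReal.ofReal_le_ofReal
    calc t ^ 4 * l ^ 4 = ((t * l + r) - r) ^ 4 := by ring
      _ ≤ 8 * ((t * l + r) ^ 4 + r ^ 4) := pow4_sub_le _ _
  have hle := lintegral_mono (μ := ν) hpt
  have hLHS : ∫⁻ t, ENNReal.ofReal (t ^ 4) * ENNReal.ofReal (l ^ 4) ∂ν = ∞ := by
    rw [lintegral_mul_const _ (by
      exact (measurable_id.pow_const 4).ennreal_ofReal), hν]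
    apply ENNReal.top_mul
    simp only [ne_eq, ENNReal.ofReal_eq_zero, not_le]
    positivity
  have hRHS : ∫⁻ t, ENNReal.ofReal 8 *
      (ENNReal.ofReal ((t * l + r) ^ 4) + ENNReal.ofReal (r ^ 4)) ∂ν ≠ ∞ := by
    rw [lintegral_const_mul _ (f := fun t => ENNReal.ofReal ((t * l + r) ^ 4) + ENNReal.ofReal (r ^ 4))
      (hA.add measurable_const)]
    apply ENNReal.mul_ne_top ENNReal.ofReal_ne_top
    rw [lintegral_add_right _ measurable_const, lintegral_const]
    simp only [measure_univ, mul_one]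
    exact ENNReal.add_ne_top.2 ⟨hfin, ENNReal.ofReal_ne_top⟩
  rw [hLHS] at hle
  exact hRHS (top_le_iff.1 hle)

lemma nonintegrable_bad {n : ℕ} (x : Fin n → Ω → ℝ) (hm : ∀ i, Measurable (x i))
    (hind : iIndepFun x ℙ)
    (hx2 : ∀ i, MemLp (x i) 2 ℙ) (hmean : ∀ i, ∫ ω, x i ω ∂ℙ = 0)
    (hvar : ∀ i, ∫ ω, (x i ω) ^ 2 ∂ℙ = 1)
    (mm : Fin n → Fin n → ℝ) (hdiag : ∀ u, mm u u = 0)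
    (i : Fin n) (hbad : ¬ MemLp (x i) 4 ℙ)
    (v0 : Fin n) (hv0 : v0 ≠ i) (hc0 : mm i v0 + mm v0 i ≠ 0) :
    ¬ Integrable (fun ω => (∑ u, ∑ v, mm u v * (x u ω * x v ω)) ^ 4) ℙ := by
  classical
  set c : Fin n → ℝ := fun v => mm i v + mm v i with hc
  set s : Finset (Fin n) := univ.erase i with hsdef
  set L : Ω → ℝ := fun ω => ∑ v ∈ s, c v * x v ω with hL
  set R : Ω → ℝ := fun ω => ∑ u ∈ s, ∑ v ∈ s, mm u v * (x u ω * x v ω) with hR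
  have hLmeas : Measurable L := by
    apply Finset.measurable_sum
    intro v _
    exact (hm v).const_mul (c v)
  have hRmeas : Measurable R := by
    apply Finset.measurable_sum
    intro u _
    apply Finset.measurable_sum
    intro v _
    exact (((hm u).mul (hm v))).const_mul (mm u v)
  -- decomposition S = x i * L + R
  have hS : ∀ ω, (∑ u, ∑ v, mm u v * (x u ω * x v ω)) = x i ω * L ω + R ω := by
    intro ω
    have e1 : ∑ v, mm i v * (x i ω * x v ω) = ∑ v ∈ s, mm i v * (x i ω * x v ω) := by
      rw [← Finset.add_sum_erase univ (fun v => mm i v * (x i ω * x v ω)) (mem_univ i)]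
      all_goals simp [hsdef, hdiag i]
    have e2 : ∀ u, ∑ v, mm u v * (x u ω * x v ω)
        = mm u i * (x u ω * x i ω) + ∑ v ∈ s, mm u v * (x u ω * x v ω) := by
      intro u
      rw [← Finset.add_sum_erase univ (fun v => mm u v * (x u ω * x v ω)) (mem_univ i)]
      all_goals simp [hsdef]
    calc ∑ u, ∑ v, mm u v * (x u ω * x v ω)
        = (∑ v, mm i v * (x i ω * x v ω))
          + ∑ u ∈ s, ∑ v, mm u v * (x u ω * x v ω) :=
          (Finset.add_sum_erase _ _ (mem_univ i)).symm
      _ = (∑ v ∈ s, mm i v * (x i ω * x v ω))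
          + ((∑ u ∈ s, mm u i * (x u ω * x i ω)) + R ω) := by
          rw [e1]
          congr 1
          rw [← Finset.sum_add_distrib]
          exact Finset.sum_congr rfl fun u _ => e2 u
      _ = x i ω * L ω + R ω := by
          rw [hL]
          simp only [Finset.mul_sum]
          rw [← add_assoc, ← Finset.sum_add_distrib]
          congr 1
          refine Finset.sum_congr rfl fun v _ => ?_
          rw [hc]
          ring
  -- P(L ≠ 0) > 0
  have hx1int : ∀ v, Integrable (x v) ℙ := fun v => (hx2 v).integrable (by norm_num)
  have hx2sq : ∀ v, Integrable (fun ω => x v ω ^ 2) ℙ := by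
    intro v
    have h := (memLp_two_iff_integrable_sq (hm v).aestronglyMeasurable).1 (hx2 v)
    exact h.congr (Filter.Eventually.of_forall fun ω => rfl)
  have hprodint : ∀ v w : Fin n, Integrable (fun ω => (c v * x v ω) * (c w * x w ω)) ℙ := by
    intro v w
    by_cases hvw : v = w
    · subst hvw
      refine ((hx2sq v).const_mul (c v * c v)).congr
        (Filter.Eventually.of_forall fun ω => by ring)
    · have hiv : IndepFun (x v) (x w) ℙ := hind.indepFun hvw
      have := hiv.integrable_mul (hx1int v) (hx1int w)
      refine (this.const_mul (c v * c w)).congr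
        (Filter.Eventually.of_forall fun ω => by
          show c v * c w * (x v ω * x w ω) = _
          ring)
  have hintL2 : ∫ ω, L ω ^ 2 ∂ℙ = ∑ v ∈ s, c v ^ 2 := by
    have e : ∀ ω, L ω ^ 2 = ∑ v ∈ s, ∑ w ∈ s, (c v * x v ω) * (c w * x w ω) := by
      intro ω
      rw [hL, sq, Finset.sum_mul_sum]
    calc ∫ ω, L ω ^ 2 ∂ℙ
        = ∫ ω, ∑ v ∈ s, ∑ w ∈ s, (c v * x v ω) * (c w * x w ω) ∂ℙ := by
          exact integral_congr_ae (Filter.Eventually.of_forall e)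
      _ = ∑ v ∈ s, ∫ ω, ∑ w ∈ s, (c v * x v ω) * (c w * x w ω) ∂ℙ :=
          integral_finset_sum _ fun v _ => integrable_finset_sum _ fun w _ => hprodint v w
      _ = ∑ v ∈ s, ∑ w ∈ s, ∫ ω, (c v * x v ω) * (c w * x w ω) ∂ℙ :=
          Finset.sum_congr rfl fun v _ => integral_finset_sum _ fun w _ => hprodint v w
      _ = ∑ v ∈ s, c v ^ 2 := by
          refine Finset.sum_congr rfl fun v hv => ?_
          rw [Finset.sum_eq_single_of_mem v hv]
          · have : ∫ ω, (c v * x v ω) * (c v * x v ω) ∂ℙ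
                = (c v * c v) * ∫ ω, x v ω ^ 2 ∂ℙ := by
              rw [← integral_const_mul]
              exact integral_congr_ae (Filter.Eventually.of_forall fun ω => by ring)
            rw [this, hvar v]
            ring
          · intro w _ hwv
            have hiv : IndepFun (x v) (x w) ℙ := hind.indepFun (Ne.symm hwv)
            have e2 : ∫ ω, (c v * x v ω) * (c w * x w ω) ∂ℙ
                = (c v * c w) * ∫ ω, x v ω * x w ω ∂ℙ := by
              rw [← integral_const_mul]
              exact integral_congr_ae (Filter.Eventually.of_forall fun ω => by ring)
            have e3 : ∫ ω, x v ω * x w ω ∂ℙ = (∫ ω, x v ω ∂ℙ) * ∫ ω, x w ω ∂ℙ :=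
              hiv.integral_fun_mul_eq_mul_integral (hx1int v).aestronglyMeasurable (hx1int w).aestronglyMeasurable
            rw [e2, e3, hmean v]
            ring
  have hv0mem : v0 ∈ s := Finset.mem_erase.2 ⟨hv0, mem_univ v0⟩
  have hLpos : 0 < ℙ {ω | L ω ≠ 0} := by
    by_contra h
    push_neg at h
    have h0 : ℙ {ω | L ω ≠ 0} = 0 := le_antisymm h (by positivity)
    have hae : L =ᵐ[ℙ] (fun _ => 0) := by
      rw [Filter.EventuallyEq, ae_iff]
      simpa using h0
    have hzero : ∫ ω, L ω ^ 2 ∂ℙ = 0 := by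
      have h2 : (fun ω => L ω ^ 2) =ᵐ[ℙ] (fun _ => 0) := by
        filter_upwards [hae] with ω hω
        simp [hω]
      rw [integral_congr_ae h2, integral_zero]
    rw [hintL2] at hzero
    have hle : c v0 ^ 2 ≤ 0 := hzero ▸ Finset.single_le_sum
      (f := fun v => c v ^ 2) (fun v _ => sq_nonneg (c v)) hv0mem
    exact hc0 (pow_eq_zero_iff (n := 2) (by norm_num) |>.1 (le_antisymm hle (sq_nonneg _)))
  -- independence of (L, R) and x i
  have hYmeas : Measurable (fun ω => (L ω, R ω)) := hLmeas.prodMk hRmeas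
  have hYi : IndepFun (fun ω => (L ω, R ω)) (x i) ℙ := by
    have hdisj : Disjoint s ({i} : Finset (Fin n)) := by
      simp [hsdef, Finset.disjoint_singleton_right]
    have hfin := hind.indepFun_finset s {i} hdisj hm
    let φ : (∀ v : (s : Finset (Fin n)), ℝ) → ℝ × ℝ := fun z =>
      (∑ v : (s : Finset (Fin n)), c v * z v,
        ∑ u : (s : Finset (Fin n)), ∑ v : (s : Finset (Fin n)), mm u v * (z u * z v))
    let ψ : (∀ _ : ({i} : Finset (Fin n)), ℝ) → ℝ := fun z => z ⟨i, mem_singleton_self i⟩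
    have hφ : Measurable φ := by
      apply Measurable.prodMk
      · exact Finset.measurable_sum _ fun v _ => (measurable_pi_apply v).const_mul _
      · exact Finset.measurable_sum _ fun u _ => Finset.measurable_sum _ fun v _ =>
          ((measurable_pi_apply u).mul (measurable_pi_apply v)).const_mul _
    have hψ : Measurable ψ := measurable_pi_apply _
    have hcomp := hfin.comp hφ hψ
    have e1 : (φ ∘ fun a (v : (s : Finset (Fin n))) => x v a) = fun ω => (L ω, R ω) := by
      funext ω
      simp only [Function.comp_apply, φ]
      congr 1
      · rw [hL]
        exact Finset.sum_coe_sort s (fun v => c v * x v ω)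
      · rw [hR]
        calc ∑ u : (s : Finset (Fin n)), ∑ v : (s : Finset (Fin n)),
              mm u v * (x u ω * x v ω)
            = ∑ u : (s : Finset (Fin n)), ∑ v ∈ s, mm u v * (x u ω * x v ω) :=
              Finset.sum_congr rfl fun u _ =>
                Finset.sum_coe_sort s (fun v => mm u v * (x u ω * x v ω))
          _ = ∑ u ∈ s, ∑ v ∈ s, mm u v * (x u ω * x v ω) :=
              Finset.sum_coe_sort s (fun u => ∑ v ∈ s, mm u v * (x u ω * x v ω))
    have e2 : (ψ ∘ fun a (v : ({i} : Finset (Fin n))) => x v a) = x i := by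
      funext ω
      rfl
    rw [e1, e2] at hcomp
    exact hcomp
  -- main lintegral computation
  intro hInt
  have hSmeas : Measurable (fun ω => (∑ u, ∑ v, mm u v * (x u ω * x v ω)) ^ 4) := by
    apply Measurable.pow_const
    apply Finset.measurable_sum
    intro u _
    apply Finset.measurable_sum
    intro v _
    exact ((hm u).mul (hm v)).const_mul _
  have hfin := (hasFiniteIntegral_iff_ofReal
    (Filter.Eventually.of_forall fun ω => by positivity)).1 hInt.2
  -- compute the lintegral as infinite
  have hφ0 : Measurable fun p : (ℝ × ℝ) × ℝ => ENNReal.ofReal ((p.2 * p.1.1 + p.1.2) ^ 4) := by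
    apply Measurable.ennreal_ofReal
    exact ((measurable_snd.mul (measurable_fst.fst)).add measurable_fst.snd).pow_const 4
  have hmap : Measure.map (fun ω => ((L ω, R ω), x i ω)) ℙ
      = (Measure.map (fun ω => (L ω, R ω)) ℙ).prod (Measure.map (x i) ℙ) :=
    (indepFun_iff_map_prod_eq_prod_map_map hYmeas.aemeasurable
      (hm i).aemeasurable).1 hYi
  have hfm : Measurable fun t : ℝ => ENNReal.ofReal (t ^ 4) :=
    (measurable_id.pow_const 4).ennreal_ofReal
  have hν2 : ∫⁻ t, ENNReal.ofReal (t ^ 4) ∂(Measure.map (x i) ℙ) = ∞ := by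
    rw [lintegral_map hfm (hm i)]
    exact lintegral_pow4_eq_top (hm i) hbad
  have : (∫⁻ ω, ENNReal.ofReal ((∑ u, ∑ v, mm u v * (x u ω * x v ω)) ^ 4) ∂ℙ) = ∞ := by
    have e : ∀ ω, ENNReal.ofReal ((∑ u, ∑ v, mm u v * (x u ω * x v ω)) ^ 4)
        = (fun p : (ℝ × ℝ) × ℝ => ENNReal.ofReal ((p.2 * p.1.1 + p.1.2) ^ 4))
            ((L ω, R ω), x i ω) := by
      intro ω
      rw [hS ω]
    calc ∫⁻ ω, ENNReal.ofReal ((∑ u, ∑ v, mm u v * (x u ω * x v ω)) ^ 4) ∂ℙ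
        = ∫⁻ ω, (fun p : (ℝ × ℝ) × ℝ => ENNReal.ofReal ((p.2 * p.1.1 + p.1.2) ^ 4))
            ((L ω, R ω), x i ω) ∂ℙ := lintegral_congr e
      _ = ∫⁻ p, ENNReal.ofReal ((p.2 * p.1.1 + p.1.2) ^ 4)
            ∂(Measure.map (fun ω => ((L ω, R ω), x i ω)) ℙ) :=
          (lintegral_map hφ0 (hYmeas.prodMk (hm i))).symm
      _ = ∫⁻ y, (∫⁻ t, ENNReal.ofReal ((t * y.1 + y.2) ^ 4) ∂(Measure.map (x i) ℙ))
            ∂(Measure.map (fun ω => (L ω, R ω)) ℙ) := by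
          rw [hmap]
          rw [lintegral_prod _ hφ0.aemeasurable]
      _ = ∞ := by
          have hAset : MeasurableSet {y : ℝ × ℝ | y.1 ≠ 0} := by
            have : {y : ℝ × ℝ | y.1 ≠ 0} = Prod.fst ⁻¹' ({0}ᶜ) := rfl
            rw [this]
            exact measurable_fst (measurableSet_singleton 0).compl
          have hprob : IsProbabilityMeasure (Measure.map (x i) ℙ) :=
            Measure.isProbabilityMeasure_map (hm i).aemeasurable
          have hinner : ∀ y : ℝ × ℝ, y.1 ≠ 0 →
              ∫⁻ t, ENNReal.ofReal ((t * y.1 + y.2) ^ 4) ∂(Measure.map (x i) ℙ) = ∞ :=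
            fun y hy => inner_lintegral_top _ hν2 y.1 y.2 hy
          have hge : ∫⁻ y in {y : ℝ × ℝ | y.1 ≠ 0},
              (∫⁻ t, ENNReal.ofReal ((t * y.1 + y.2) ^ 4) ∂(Measure.map (x i) ℙ))
              ∂(Measure.map (fun ω => (L ω, R ω)) ℙ)
              ≤ ∫⁻ y, (∫⁻ t, ENNReal.ofReal ((t * y.1 + y.2) ^ 4) ∂(Measure.map (x i) ℙ))
              ∂(Measure.map (fun ω => (L ω, R ω)) ℙ) :=
            setLIntegral_le_lintegral _ _
          have hset : ∫⁻ y in {y : ℝ × ℝ | y.1 ≠ 0},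
              (∫⁻ t, ENNReal.ofReal ((t * y.1 + y.2) ^ 4) ∂(Measure.map (x i) ℙ))
              ∂(Measure.map (fun ω => (L ω, R ω)) ℙ) = ∞ := by
            rw [setLIntegral_congr_fun hAset
              (fun y hy => hinner y hy)]
            rw [setLIntegral_const]
            have hmeaspos : Measure.map (fun ω => (L ω, R ω)) ℙ {y : ℝ × ℝ | y.1 ≠ 0} ≠ 0 := by
              rw [Measure.map_apply hYmeas hAset]
              have : (fun ω => (L ω, R ω)) ⁻¹' {y : ℝ × ℝ | y.1 ≠ 0} = {ω | L ω ≠ 0} := rfl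
              rw [this]
              exact hLpos.ne'
            exact ENNReal.top_mul hmeaspos
          exact top_le_iff.1 (hset ▸ hge)
  rw [this] at hfin
  exact absurd hfin (by simp)


/-- Multiplicity of index `j` among the 8 slots of `q`. -/
def cQ {n : ℕ} (q : Fin 4 → Fin n × Fin n) (j : Fin n) : ℕ :=
  ∑ k : Fin 4, ((if (q k).1 = j then 1 else 0) + (if (q k).2 = j then 1 else 0))

lemma cQ_sum {n : ℕ} (q : Fin 4 → Fin n × Fin n) : ∑ j, cQ q j = 8 := by
  unfold cQ
  rw [Finset.sum_comm]
  have : ∀ k : Fin 4, (∑ j, ((if (q k).1 = j then 1 else 0)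
      + (if (q k).2 = j then 1 else 0)) : ℕ) = 2 := by
    intro k
    rw [Finset.sum_add_distrib, Finset.sum_ite_eq univ (q k).1 (fun _ => (1:ℕ)),
      Finset.sum_ite_eq univ (q k).2 (fun _ => (1:ℕ))]
    simp
  simp [this]

lemma cQ_le_four {n : ℕ} (q : Fin 4 → Fin n × Fin n)
    (hoff : ∀ k, (q k).1 ≠ (q k).2) (j : Fin n) : cQ q j ≤ 4 := by
  unfold cQ
  calc ∑ k : Fin 4, ((if (q k).1 = j then 1 else 0) + (if (q k).2 = j then 1 else 0))
      ≤ ∑ _k : Fin 4, 1 := by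
        refine Finset.sum_le_sum fun k _ => ?_
        split_ifs with h1 h2
        · exact absurd (h1.trans h2.symm) (hoff k)
        · omega
        · omega
        · omega
    _ = 4 := by simp

lemma cQ_appear {n : ℕ} (q : Fin 4 → Fin n × Fin n) (j : Fin n) (h : cQ q j ≠ 0) :
    ∃ k, (q k).1 = j ∨ (q k).2 = j := by
  by_contra hcon
  push_neg at hcon
  apply h
  unfold cQ
  refine Finset.sum_eq_zero fun k _ => ?_
  have := hcon k
  simp [this.1, this.2]

lemma prod_moment_le {n : ℕ} (E : Fin n → ℝ) (cq : Fin n → ℕ) (ν₄ : ℝ) (hν : 1 ≤ ν₄)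
    (hbound : ∀ j, |E j| ≤ ν₄ ^ (if 3 ≤ cq j then 1 else 0))
    (hc1 : ∀ j, cq j ≠ 1) (hc4 : ∀ j, cq j ≤ 4) (hsum : ∑ j, cq j = 8) :
    |∏ j, E j| ≤ ν₄ ^ 2 := by
  classical
  have hν0 : (0:ℝ) ≤ ν₄ := le_trans zero_le_one hν
  have hm2 : (∑ j, (if 3 ≤ cq j then 1 else 0) : ℕ) ≤ 2 := by
    set m := (univ.filter (fun j : Fin n => 3 ≤ cq j)).card with hmdef
    set t := (univ.filter (fun j : Fin n => cq j ≠ 0)).card with htdef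
    have hms : m ≤ t := by
      apply Finset.card_le_card
      intro j hj
      simp only [Finset.mem_filter] at hj ⊢
      exact ⟨hj.1, by omega⟩
    have hsum1 : (∑ j, (if 3 ≤ cq j then 1 else 0) : ℕ) = m := by
      rw [hmdef, Finset.card_filter]
    have hsum2 : (∑ j, (if cq j ≠ 0 then 1 else 0) : ℕ) = t := by
      rw [htdef, Finset.card_filter]
    have hlow : 2 * t + m ≤ 8 := by
      have h1 : ∑ j, (2 * (if cq j ≠ 0 then 1 else 0) + (if 3 ≤ cq j then 1 else 0))
          ≤ ∑ j, cq j := by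
        refine Finset.sum_le_sum fun j _ => ?_
        have := hc1 j
        split_ifs <;> omega
      rw [Finset.sum_add_distrib, ← Finset.mul_sum, hsum1, hsum2, hsum] at h1
      exact h1
    have hhigh : 8 ≤ 4 * t := by
      have h1 : ∑ j, cq j ≤ ∑ j, 4 * (if cq j ≠ 0 then 1 else 0) := by
        refine Finset.sum_le_sum fun j _ => ?_
        have := hc4 j
        split_ifs <;> omega
      rw [← Finset.mul_sum, hsum2, hsum] at h1
      exact h1
    rw [hsum1]
    omega
  calc |∏ j, E j| = ∏ j, |E j| := Finset.abs_prod univ E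
    _ ≤ ∏ j, ν₄ ^ (if 3 ≤ cq j then 1 else 0) :=
        Finset.prod_le_prod (fun j _ => abs_nonneg _) (fun j _ => hbound j)
    _ = ν₄ ^ (∑ j, (if 3 ≤ cq j then 1 else 0) : ℕ) :=
        Finset.prod_pow_eq_pow_sum univ _ ν₄
    _ ≤ ν₄ ^ 2 := pow_le_pow_right₀ hν hm2

lemma single_expand {n : ℕ} {Ω : Type} (x : Fin n → Ω → ℝ) (ω : Ω) (u : Fin n) :
    x u ω = ∏ j, x j ω ^ (if u = j then 1 else 0) := by
  have h : ∀ j : Fin n, x j ω ^ (if u = j then 1 else 0)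
      = (if u = j then x j ω else 1) := by
    intro j
    split_ifs <;> simp
  rw [Finset.prod_congr rfl fun j _ => h j, Finset.prod_ite_eq]
  simp

lemma mono_expand {n : ℕ} {Ω : Type} (x : Fin n → Ω → ℝ) (ω : Ω)
    (q : Fin 4 → Fin n × Fin n) :
    ∏ k, (x (q k).1 ω * x (q k).2 ω) = ∏ j, x j ω ^ cQ q j := by
  have step1 : ∀ k : Fin 4, x (q k).1 ω * x (q k).2 ω
      = ∏ j, x j ω ^ ((if (q k).1 = j then 1 else 0) + (if (q k).2 = j then 1 else 0)) := by
    intro k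
    rw [single_expand x ω (q k).1, single_expand x ω (q k).2, ← Finset.prod_mul_distrib]
    exact Finset.prod_congr rfl fun j _ => (pow_add _ _ _).symm
  rw [Finset.prod_congr rfl fun k _ => step1 k, Finset.prod_comm]
  exact Finset.prod_congr rfl fun j _ =>
    Finset.prod_pow_eq_pow_sum univ _ _

end OffDiag4

open OffDiag4 in
/-- **Fourth-moment bound for the off-diagonal quadratic form.**
There is an absolute constant `C > 0` such that for independent real random variables
`x_1, …, x_n` with mean `0`, variance `1` and `E|x_i|^4 ≤ ν₄`, and any deterministic
nonnegative definite `n × n` real matrix `M`,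
`E|Σ_{u≠v} m_uv x_u x_v|⁴ ≤ C ν₄² (tr (M²))²`. -/
theorem off_diagonal_quadratic_form_fourth_moment_bound :
    ∃ C : ℝ, 0 < C ∧
      ∀ (n : ℕ) (Ω : Type) (_ : MeasureSpace Ω) (_ : IsProbabilityMeasure (ℙ : Measure Ω))
        (x : Fin n → Ω → ℝ) (ν₄ : ℝ),
        (∀ i, Measurable (x i)) →
        iIndepFun x ℙ →
        (∀ i, ∫ ω, x i ω ∂ℙ = 0) →
        (∀ i, ∫ ω, (x i ω) ^ 2 ∂ℙ = 1) →
        (∀ i, ∫ ω, |x i ω| ^ 4 ∂ℙ ≤ ν₄) →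
        ∀ M : Matrix (Fin n) (Fin n) ℝ, M.PosSemidef →
          ∫ ω, |∑ u, ∑ v, if u = v then 0 else M u v * x u ω * x v ω| ^ 4 ∂ℙ ≤
            C * ν₄ ^ 2 * Matrix.trace (M ^ 2) ^ 2 := by
  classical
  refine ⟨1152, by norm_num, ?_⟩
  intro n Ω _ _ x ν₄ hmeas hindep hmean hvar h4 M hpsd
  set mm : Fin n → Fin n → ℝ := fun u v => if u = v then 0 else M u v with hmmdef
  have hdiag : ∀ u, mm u u = 0 := fun u => by simp [hmmdef]
  have hMsym : ∀ u v, M u v = M v u := by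
    intro u v
    have h := congrFun (congrFun hpsd.1 v) u
    simpa [Matrix.conjTranspose_apply] using h
  have hmmsym : ∀ u v, mm u v = mm v u := by
    intro u v
    by_cases h : u = v
    · subst h; rfl
    · simp [hmmdef, h, Ne.symm h, hMsym u v]
  have hSrw : (fun ω => |∑ u, ∑ v, if u = v then 0 else M u v * x u ω * x v ω| ^ 4)
      = fun ω => (∑ u, ∑ v, mm u v * (x u ω * x v ω)) ^ 4 := by
    funext ω
    have h1 : (∑ u, ∑ v, if u = v then 0 else M u v * x u ω * x v ω)
        = ∑ u, ∑ v, mm u v * (x u ω * x v ω) := by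
      refine Finset.sum_congr rfl fun u _ => Finset.sum_congr rfl fun v _ => ?_
      by_cases h : u = v
      · simp [hmmdef, h]
      · simp only [hmmdef, if_neg h]
        ring
    rw [h1, ← abs_pow, abs_of_nonneg (by positivity :
      (0:ℝ) ≤ (∑ u, ∑ v, mm u v * (x u ω * x v ω)) ^ 4)]
  have hgoal : ∫ ω, |∑ u, ∑ v, if u = v then 0 else M u v * x u ω * x v ω| ^ 4 ∂ℙ
      = ∫ ω, (∑ u, ∑ v, mm u v * (x u ω * x v ω)) ^ 4 ∂ℙ := by
    rw [hSrw]
  rw [hgoal]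
  have hRHS0 : (0:ℝ) ≤ 1152 * ν₄ ^ 2 * Matrix.trace (M ^ 2) ^ 2 := by positivity
  by_cases hzero : ∀ u v, mm u v = 0
  · have hz : (fun ω => (∑ u, ∑ v, mm u v * (x u ω * x v ω)) ^ 4) = fun _ => 0 := by
      funext ω; simp [hzero]
    rw [hz, integral_zero]
    exact hRHS0
  push_neg at hzero
  obtain ⟨u₀, v₀, hu₀v₀⟩ := hzero
  by_cases hInt : Integrable (fun ω => (∑ u, ∑ v, mm u v * (x u ω * x v ω)) ^ 4) ℙ
  case neg =>
    rw [integral_undef hInt]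
    exact hRHS0
  -- all relevant fourth moments must be finite
  have hx2 : ∀ i, MemLp (x i) 2 ℙ := by
    intro i
    have hInt2 : Integrable (fun ω => x i ω ^ 2) ℙ := by
      by_contra h
      have hv := hvar i
      rw [integral_undef h] at hv
      exact zero_ne_one hv
    exact (memLp_two_iff_integrable_sq (hmeas i).aestronglyMeasurable).2 hInt2
  have hgood : ∀ u v, mm u v ≠ 0 → MemLp (x u) 4 ℙ ∧ MemLp (x v) 4 ℙ := by
    intro u v h
    have huv : u ≠ v := by
      intro he
      exact h (he ▸ hdiag u)
    have hsum2 : mm u v + mm v u ≠ 0 := by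
      rw [← hmmsym u v]
      intro h0
      apply h
      linarith
    constructor
    · by_contra hbad
      exact nonintegrable_bad x hmeas hindep hx2 hmean hvar mm hdiag u hbad v
        (Ne.symm huv) hsum2 hInt
    · by_contra hbad
      refine nonintegrable_bad x hmeas hindep hx2 hmean hvar mm hdiag v hbad u
        huv ?_ hInt
      rw [hmmsym v u]
      intro h0
      apply h
      linarith
  have hν : 1 ≤ ν₄ := one_le_nu (hmeas u₀) (hgood u₀ v₀ hu₀v₀).1 (hvar u₀) (h4 u₀)
  -- expansion of the 4th power
  have hexp : ∀ ω, (∑ u, ∑ v, mm u v * (x u ω * x v ω)) ^ 4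
      = ∑ q : Fin 4 → Fin n × Fin n,
          (∏ k, mm (q k).1 (q k).2) * ∏ j, x j ω ^ cQ q j := by
    intro ω
    have h1 : ∑ p : Fin n × Fin n, mm p.1 p.2 * (x p.1 ω * x p.2 ω)
        = ∑ u, ∑ v, mm u v * (x u ω * x v ω) := by
      simp only [Fintype.sum_prod_type]
    have h2 : ∏ _k : Fin 4, (∑ p : Fin n × Fin n, mm p.1 p.2 * (x p.1 ω * x p.2 ω))
        = (∑ p : Fin n × Fin n, mm p.1 p.2 * (x p.1 ω * x p.2 ω)) ^ 4 := by
      rw [Finset.prod_const]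
      simp
    calc (∑ u, ∑ v, mm u v * (x u ω * x v ω)) ^ 4
        = (∑ p : Fin n × Fin n, mm p.1 p.2 * (x p.1 ω * x p.2 ω)) ^ 4 := by rw [h1]
      _ = ∏ _k : Fin 4, (∑ p : Fin n × Fin n, mm p.1 p.2 * (x p.1 ω * x p.2 ω)) := h2.symm
      _ = ∑ q ∈ Fintype.piFinset (fun _ : Fin 4 => (univ : Finset (Fin n × Fin n))),
            ∏ k, mm (q k).1 (q k).2 * (x (q k).1 ω * x (q k).2 ω) :=
          Finset.prod_univ_sum _ _
      _ = ∑ q : Fin 4 → Fin n × Fin n,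
            ∏ k, mm (q k).1 (q k).2 * (x (q k).1 ω * x (q k).2 ω) := by
          rw [Fintype.piFinset_univ]
      _ = ∑ q : Fin 4 → Fin n × Fin n,
            (∏ k, mm (q k).1 (q k).2) * ∏ j, x j ω ^ cQ q j := by
          refine Finset.sum_congr rfl fun q _ => ?_
          rw [Finset.prod_mul_distrib, mono_expand x ω q]
  -- integrability of each monomial
  have hVw0 : ∀ q : Fin 4 → Fin n × Fin n,
      (0:ℝ) ≤ (if (∀ j, cQ q j ≠ 1) then (1:ℝ) else 0) * ∏ k, |mm (q k).1 (q k).2| := by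
    intro q
    apply mul_nonneg
    · split_ifs <;> norm_num
    · exact Finset.prod_nonneg fun k _ => abs_nonneg _
  have hgoodj : ∀ (q : Fin 4 → Fin n × Fin n), (∀ k, mm (q k).1 (q k).2 ≠ 0) →
      ∀ j, cQ q j ≠ 0 → MemLp (x j) 4 ℙ := by
    intro q hne j hc
    obtain ⟨k, hk⟩ := cQ_appear q j hc
    rcases hk with hk | hk
    · exact hk ▸ (hgood _ _ (hne k)).1
    · exact hk ▸ (hgood _ _ (hne k)).2
  have hoff_of : ∀ (q : Fin 4 → Fin n × Fin n), (∀ k, mm (q k).1 (q k).2 ≠ 0) →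
      ∀ k, (q k).1 ≠ (q k).2 := by
    intro q hne k he
    exact hne k (by rw [he]; exact hdiag _)
  have hint_j : ∀ (q : Fin 4 → Fin n × Fin n), (∀ k, mm (q k).1 (q k).2 ≠ 0) →
      ∀ j, Integrable (fun ω => x j ω ^ cQ q j) ℙ := by
    intro q hne j
    by_cases hc : cQ q j = 0
    · simp only [hc, pow_zero]
      exact integrable_const 1
    · exact int_pow (hmeas j) (hgoodj q hne j hc) (cQ_le_four q (hoff_of q hne) j)
  have hindpow : ∀ (q : Fin 4 → Fin n × Fin n), iIndepFun
      (fun j => fun ω => x j ω ^ cQ q j) ℙ :=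
    fun q => hindep.comp (fun j t => t ^ cQ q j) (fun j => measurable_id.pow_const _)
  have hTermInt : ∀ q : Fin 4 → Fin n × Fin n,
      Integrable (fun ω => (∏ k, mm (q k).1 (q k).2) * ∏ j, x j ω ^ cQ q j) ℙ := by
    intro q
    by_cases hq0 : (∏ k, mm (q k).1 (q k).2) = 0
    · simp only [hq0, zero_mul]
      exact integrable_const 0
    · have hne : ∀ k, mm (q k).1 (q k).2 ≠ 0 :=
        fun k => Finset.prod_ne_zero_iff.1 hq0 k (mem_univ k)
      exact ((indep_prod _ (fun j => (hmeas j).pow_const _) (hindpow q)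
        (hint_j q hne)).1).const_mul _
  have hIntegral : ∫ ω, (∑ u, ∑ v, mm u v * (x u ω * x v ω)) ^ 4 ∂ℙ
      = ∑ q : Fin 4 → Fin n × Fin n,
          (∏ k, mm (q k).1 (q k).2) * ∫ ω, ∏ j, x j ω ^ cQ q j ∂ℙ := by
    calc ∫ ω, (∑ u, ∑ v, mm u v * (x u ω * x v ω)) ^ 4 ∂ℙ
        = ∫ ω, ∑ q : Fin 4 → Fin n × Fin n,
            (∏ k, mm (q k).1 (q k).2) * ∏ j, x j ω ^ cQ q j ∂ℙ :=
          integral_congr_ae (Filter.Eventually.of_forall hexp)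
      _ = ∑ q : Fin 4 → Fin n × Fin n,
            ∫ ω, (∏ k, mm (q k).1 (q k).2) * ∏ j, x j ω ^ cQ q j ∂ℙ :=
          integral_finset_sum _ fun q _ => hTermInt q
      _ = ∑ q : Fin 4 → Fin n × Fin n,
            (∏ k, mm (q k).1 (q k).2) * ∫ ω, ∏ j, x j ω ^ cQ q j ∂ℙ :=
          Finset.sum_congr rfl fun q _ => integral_const_mul _ _
  -- the per-term bound
  have hterm : ∀ q : Fin 4 → Fin n × Fin n,
      (∏ k, mm (q k).1 (q k).2) * ∫ ω, ∏ j, x j ω ^ cQ q j ∂ℙ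
      ≤ ν₄ ^ 2 * ((if (∀ j, cQ q j ≠ 1) then (1:ℝ) else 0)
          * ∏ k, |mm (q k).1 (q k).2|) := by
    intro q
    by_cases hq0 : (∏ k, mm (q k).1 (q k).2) = 0
    · rw [hq0, zero_mul]
      exact mul_nonneg (by positivity) (hVw0 q)
    have hne : ∀ k, mm (q k).1 (q k).2 ≠ 0 :=
      fun k => Finset.prod_ne_zero_iff.1 hq0 k (mem_univ k)
    have hiq := indep_prod (fun j ω => x j ω ^ cQ q j)
      (fun j => (hmeas j).pow_const _) (hindpow q) (hint_j q hne)
    rw [hiq.2]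
    by_cases hone : ∀ j, cQ q j ≠ 1
    case neg =>
      push_neg at hone
      obtain ⟨j0, hj0⟩ := hone
      have hzero1 : (∏ j, ∫ ω, x j ω ^ cQ q j ∂ℙ) = 0 := by
        refine Finset.prod_eq_zero (mem_univ j0) ?_
        rw [hj0]
        simpa using hmean j0
      rw [hzero1, mul_zero]
      exact mul_nonneg (by positivity) (hVw0 q)
    case pos =>
      have hc4 := cQ_le_four q (hoff_of q hne)
      have hEb : ∀ j, |∫ ω, x j ω ^ cQ q j ∂ℙ| ≤ ν₄ ^ (if 3 ≤ cQ q j then 1 else 0) := by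
        intro j
        by_cases hc : cQ q j = 0
        · rw [hc]
          simp only [pow_zero, integral_const, measure_univ, ENNReal.toReal_one, smul_eq_mul,
            mul_one]
          rw [if_neg (by omega)]
          simp
        · exact moment_bound (hmeas j) (hgoodj q hne j hc) (hmean j) (hvar j) (h4 j)
            (hc4 j) (hone j)
      have hprodE : |∏ j, ∫ ω, x j ω ^ cQ q j ∂ℙ| ≤ ν₄ ^ 2 :=
        prod_moment_le _ (cQ q) ν₄ hν hEb hone hc4 (cQ_sum q)
      rw [if_pos hone, one_mul]
      calc (∏ k, mm (q k).1 (q k).2) * ∏ j, ∫ ω, x j ω ^ cQ q j ∂ℙ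
          ≤ |(∏ k, mm (q k).1 (q k).2) * ∏ j, ∫ ω, x j ω ^ cQ q j ∂ℙ| := le_abs_self _
        _ = (∏ k, |mm (q k).1 (q k).2|) * |∏ j, ∫ ω, x j ω ^ cQ q j ∂ℙ| := by
            rw [abs_mul, Finset.abs_prod]
        _ ≤ (∏ k, |mm (q k).1 (q k).2|) * ν₄ ^ 2 :=
            mul_le_mul_of_nonneg_left hprodE
              (Finset.prod_nonneg fun k _ => abs_nonneg _)
        _ = ν₄ ^ 2 * ∏ k, |mm (q k).1 (q k).2| := mul_comm _ _
  -- the combinatorial certificate bound, pointwise in q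
  have hbig_nn : ∀ (q : Fin 4 → Fin n × Fin n) (σ : Equiv.Perm (Fin 4)) (ε : Fin 4 → Bool),
      (0:ℝ) ≤ (if (∃ z, Matches q σ ε (pat1 z)) then (1:ℝ) else 0)
            * ∏ k, |mm (q k).1 (q k).2|
          + ((if (∃ z, Matches q σ ε (pat2 z)) then (1:ℝ) else 0)
            * ∏ k, |mm (q k).1 (q k).2|
          + (if (∃ z, Matches q σ ε (pat3 z)) then (1:ℝ) else 0)
            * ∏ k, |mm (q k).1 (q k).2|) := by
    intro q σ ε
    have hw : (0:ℝ) ≤ ∏ k, |mm (q k).1 (q k).2| :=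
      Finset.prod_nonneg fun k _ => abs_nonneg _
    have b1 : (0:ℝ) ≤ (if (∃ z, Matches q σ ε (pat1 z)) then (1:ℝ) else 0) := by
      split_ifs <;> norm_num
    have b2 : (0:ℝ) ≤ (if (∃ z, Matches q σ ε (pat2 z)) then (1:ℝ) else 0) := by
      split_ifs <;> norm_num
    have b3 : (0:ℝ) ≤ (if (∃ z, Matches q σ ε (pat3 z)) then (1:ℝ) else 0) := by
      split_ifs <;> norm_num
    have := mul_nonneg b1 hw
    have := mul_nonneg b2 hw
    have := mul_nonneg b3 hw
    linarith
  have hcert : ∀ q : Fin 4 → Fin n × Fin n,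
      (if (∀ j, cQ q j ≠ 1) then (1:ℝ) else 0) * ∏ k, |mm (q k).1 (q k).2|
      ≤ ∑ σ : Equiv.Perm (Fin 4), ∑ ε : Fin 4 → Bool,
          ((if (∃ z, Matches q σ ε (pat1 z)) then (1:ℝ) else 0)
            * ∏ k, |mm (q k).1 (q k).2|
          + ((if (∃ z, Matches q σ ε (pat2 z)) then (1:ℝ) else 0)
            * ∏ k, |mm (q k).1 (q k).2|
          + (if (∃ z, Matches q σ ε (pat3 z)) then (1:ℝ) else 0)
            * ∏ k, |mm (q k).1 (q k).2|)) := by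
    intro q
    have hRHSnn : (0:ℝ) ≤ ∑ σ : Equiv.Perm (Fin 4), ∑ ε : Fin 4 → Bool,
        ((if (∃ z, Matches q σ ε (pat1 z)) then (1:ℝ) else 0)
          * ∏ k, |mm (q k).1 (q k).2|
        + ((if (∃ z, Matches q σ ε (pat2 z)) then (1:ℝ) else 0)
          * ∏ k, |mm (q k).1 (q k).2|
        + (if (∃ z, Matches q σ ε (pat3 z)) then (1:ℝ) else 0)
          * ∏ k, |mm (q k).1 (q k).2|)) :=
      Finset.sum_nonneg fun σ _ => Finset.sum_nonneg fun ε _ => hbig_nn q σ ε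
    by_cases hoff : ∀ k, (q k).1 ≠ (q k).2
    case neg =>
      push_neg at hoff
      obtain ⟨k0, hk0⟩ := hoff
      have hwz : (∏ k, |mm (q k).1 (q k).2|) = 0 := by
        refine Finset.prod_eq_zero (mem_univ k0) ?_
        rw [hk0, hdiag]
        simp
      have hL0 : (if (∀ j, cQ q j ≠ 1) then (1:ℝ) else 0)
          * ∏ k, |mm (q k).1 (q k).2| = 0 := by rw [hwz, mul_zero]
      rw [hL0]
      exact hRHSnn
    by_cases hone : ∀ j, cQ q j ≠ 1
    case neg =>
      rw [if_neg hone, zero_mul]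
      exact hRHSnn
    rw [if_pos hone, one_mul]
    obtain ⟨σ₀, ε₀, hcase⟩ := certificate q hoff (fun j => hone j)
    have hw : (0:ℝ) ≤ ∏ k, |mm (q k).1 (q k).2| :=
      Finset.prod_nonneg fun k _ => abs_nonneg _
    have hstep : (∏ k, |mm (q k).1 (q k).2|)
        ≤ (if (∃ z, Matches q σ₀ ε₀ (pat1 z)) then (1:ℝ) else 0)
            * ∏ k, |mm (q k).1 (q k).2|
          + ((if (∃ z, Matches q σ₀ ε₀ (pat2 z)) then (1:ℝ) else 0)
            * ∏ k, |mm (q k).1 (q k).2|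
          + (if (∃ z, Matches q σ₀ ε₀ (pat3 z)) then (1:ℝ) else 0)
            * ∏ k, |mm (q k).1 (q k).2|) := by
      have b1 : (0:ℝ) ≤ (if (∃ z, Matches q σ₀ ε₀ (pat1 z)) then (1:ℝ) else 0)
          * ∏ k, |mm (q k).1 (q k).2| :=
        mul_nonneg (by split_ifs <;> norm_num) hw
      have b2 : (0:ℝ) ≤ (if (∃ z, Matches q σ₀ ε₀ (pat2 z)) then (1:ℝ) else 0)
          * ∏ k, |mm (q k).1 (q k).2| :=
        mul_nonneg (by split_ifs <;> norm_num) hw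
      have b3 : (0:ℝ) ≤ (if (∃ z, Matches q σ₀ ε₀ (pat3 z)) then (1:ℝ) else 0)
          * ∏ k, |mm (q k).1 (q k).2| :=
        mul_nonneg (by split_ifs <;> norm_num) hw
      rcases hcase with h | h | h
      · rw [if_pos h, one_mul]
        linarith
      · rw [if_pos h, one_mul]
        linarith
      · rw [if_pos h, one_mul]
        linarith
    refine hstep.trans ?_
    have h1 := Finset.single_le_sum
      (f := fun ε : Fin 4 → Bool =>
        (if (∃ z, Matches q σ₀ ε (pat1 z)) then (1:ℝ) else 0)
          * ∏ k, |mm (q k).1 (q k).2|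
        + ((if (∃ z, Matches q σ₀ ε (pat2 z)) then (1:ℝ) else 0)
          * ∏ k, |mm (q k).1 (q k).2|
        + (if (∃ z, Matches q σ₀ ε (pat3 z)) then (1:ℝ) else 0)
          * ∏ k, |mm (q k).1 (q k).2|))
      (fun ε _ => hbig_nn q σ₀ ε) (mem_univ ε₀)
    refine h1.trans ?_
    exact Finset.single_le_sum
      (f := fun σ : Equiv.Perm (Fin 4) => ∑ ε : Fin 4 → Bool,
        ((if (∃ z, Matches q σ ε (pat1 z)) then (1:ℝ) else 0)
          * ∏ k, |mm (q k).1 (q k).2|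
        + ((if (∃ z, Matches q σ ε (pat2 z)) then (1:ℝ) else 0)
          * ∏ k, |mm (q k).1 (q k).2|
        + (if (∃ z, Matches q σ ε (pat3 z)) then (1:ℝ) else 0)
          * ∏ k, |mm (q k).1 (q k).2|)))
      (fun σ _ => Finset.sum_nonneg fun ε _ => hbig_nn q σ ε) (mem_univ σ₀)
  -- summing up
  have ha0 : ∀ u v, 0 ≤ |mm u v| := fun u v => abs_nonneg _
  have hasym : ∀ u v, |mm u v| = |mm v u| := fun u v => by rw [hmmsym u v]
  have hfilter : ∀ (σ : Equiv.Perm (Fin 4)) (ε : Fin 4 → Bool)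
      (P : (Fin 4 → Fin n × Fin n) → Prop) [DecidablePred P],
      ∑ q : Fin 4 → Fin n × Fin n, (if P q then (1:ℝ) else 0) * ∏ k, |mm (q k).1 (q k).2|
      = ∑ q ∈ univ.filter P, ∏ k, |mm (q k).1 (q k).2| := by
    intro σ ε P _
    rw [Finset.sum_filter]
    refine Finset.sum_congr rfl fun q _ => ?_
    rw [boole_mul]
  have hT : ∑ q : Fin 4 → Fin n × Fin n,
      (if (∀ j, cQ q j ≠ 1) then (1:ℝ) else 0) * ∏ k, |mm (q k).1 (q k).2|
      ≤ 1152 * (∑ u, ∑ v, |mm u v| ^ 2) ^ 2 := by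
    have hboundpereps : ∀ (σ : Equiv.Perm (Fin 4)) (ε : Fin 4 → Bool),
        ∑ q : Fin 4 → Fin n × Fin n,
          ((if (∃ z, Matches q σ ε (pat1 z)) then (1:ℝ) else 0)
            * ∏ k, |mm (q k).1 (q k).2|
          + ((if (∃ z, Matches q σ ε (pat2 z)) then (1:ℝ) else 0)
            * ∏ k, |mm (q k).1 (q k).2|
          + (if (∃ z, Matches q σ ε (pat3 z)) then (1:ℝ) else 0)
            * ∏ k, |mm (q k).1 (q k).2|))
        ≤ 3 * (∑ u, ∑ v, |mm u v| ^ 2) ^ 2 := by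
      intro σ ε
      rw [Finset.sum_add_distrib, Finset.sum_add_distrib]
      have e1 := hfilter σ ε (fun q => ∃ z, Matches q σ ε (pat1 z))
      have e2 := hfilter σ ε (fun q => ∃ z, Matches q σ ε (pat2 z))
      have e3 := hfilter σ ε (fun q => ∃ z, Matches q σ ε (pat3 z))
      rw [e1, e2, e3]
      have b1 := sum_pat1_le (fun u v => |mm u v|) ha0 hasym σ ε
      have b2 := sum_pat2_le (fun u v => |mm u v|) ha0 hasym σ ε
      have b3 := sum_pat3_le (fun u v => |mm u v|) ha0 hasym σ ε
      linarith
    calc ∑ q : Fin 4 → Fin n × Fin n,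
        (if (∀ j, cQ q j ≠ 1) then (1:ℝ) else 0) * ∏ k, |mm (q k).1 (q k).2|
        ≤ ∑ q : Fin 4 → Fin n × Fin n, ∑ σ : Equiv.Perm (Fin 4), ∑ ε : Fin 4 → Bool,
          ((if (∃ z, Matches q σ ε (pat1 z)) then (1:ℝ) else 0)
            * ∏ k, |mm (q k).1 (q k).2|
          + ((if (∃ z, Matches q σ ε (pat2 z)) then (1:ℝ) else 0)
            * ∏ k, |mm (q k).1 (q k).2|
          + (if (∃ z, Matches q σ ε (pat3 z)) then (1:ℝ) else 0)
            * ∏ k, |mm (q k).1 (q k).2|)) :=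
          Finset.sum_le_sum fun q _ => hcert q
      _ = ∑ σ : Equiv.Perm (Fin 4), ∑ q : Fin 4 → Fin n × Fin n, ∑ ε : Fin 4 → Bool,
            ((if (∃ z, Matches q σ ε (pat1 z)) then (1:ℝ) else 0)
              * ∏ k, |mm (q k).1 (q k).2|
            + ((if (∃ z, Matches q σ ε (pat2 z)) then (1:ℝ) else 0)
              * ∏ k, |mm (q k).1 (q k).2|
            + (if (∃ z, Matches q σ ε (pat3 z)) then (1:ℝ) else 0)
              * ∏ k, |mm (q k).1 (q k).2|)) := Finset.sum_comm
      _ = ∑ σ : Equiv.Perm (Fin 4), ∑ ε : Fin 4 → Bool, ∑ q : Fin 4 → Fin n × Fin n,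
            ((if (∃ z, Matches q σ ε (pat1 z)) then (1:ℝ) else 0)
              * ∏ k, |mm (q k).1 (q k).2|
            + ((if (∃ z, Matches q σ ε (pat2 z)) then (1:ℝ) else 0)
              * ∏ k, |mm (q k).1 (q k).2|
            + (if (∃ z, Matches q σ ε (pat3 z)) then (1:ℝ) else 0)
              * ∏ k, |mm (q k).1 (q k).2|)) :=
          Finset.sum_congr rfl fun σ _ => Finset.sum_comm
      _ ≤ ∑ _σ : Equiv.Perm (Fin 4), ∑ _ε : Fin 4 → Bool,
            3 * (∑ u, ∑ v, |mm u v| ^ 2) ^ 2 :=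
          Finset.sum_le_sum fun σ _ => Finset.sum_le_sum fun ε _ => hboundpereps σ ε
      _ = 1152 * (∑ u, ∑ v, |mm u v| ^ 2) ^ 2 := by
          rw [Finset.sum_const, Finset.sum_const, Finset.card_univ, Finset.card_univ]
          simp only [smul_smul, nsmul_eq_mul]
          rw [Fintype.card_perm]
          simp only [Fintype.card_fun, Fintype.card_fin, Fintype.card_bool]
          have h24 : ((Nat.factorial 4 : ℕ) : ℝ) = 24 := by norm_num [Nat.factorial]
          push_cast
          norm_num [Nat.factorial]
          ring
  -- the trace bound
  have htr : Matrix.trace (M ^ 2) = ∑ u, ∑ v, M u v ^ 2 := by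
    rw [pow_two, Matrix.trace]
    simp only [Matrix.diag_apply, Matrix.mul_apply]
    exact Finset.sum_congr rfl fun u _ => Finset.sum_congr rfl fun v _ => by
      rw [← hMsym u v, sq]
  have hfle : (∑ u, ∑ v, |mm u v| ^ 2) ≤ Matrix.trace (M ^ 2) := by
    rw [htr]
    refine Finset.sum_le_sum fun u _ => Finset.sum_le_sum fun v _ => ?_
    rw [sq_abs]
    by_cases h : u = v
    · subst h
      simp [hmmdef]
      positivity
    · simp [hmmdef, h]
  have hf0 : (0:ℝ) ≤ ∑ u, ∑ v, |mm u v| ^ 2 := by positivity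
  -- final chain
  calc ∫ ω, (∑ u, ∑ v, mm u v * (x u ω * x v ω)) ^ 4 ∂ℙ
      = ∑ q : Fin 4 → Fin n × Fin n,
          (∏ k, mm (q k).1 (q k).2) * ∫ ω, ∏ j, x j ω ^ cQ q j ∂ℙ := hIntegral
    _ ≤ ∑ q : Fin 4 → Fin n × Fin n, ν₄ ^ 2 *
          ((if (∀ j, cQ q j ≠ 1) then (1:ℝ) else 0) * ∏ k, |mm (q k).1 (q k).2|) :=
        Finset.sum_le_sum fun q _ => hterm q
    _ = ν₄ ^ 2 * ∑ q : Fin 4 → Fin n × Fin n,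
          (if (∀ j, cQ q j ≠ 1) then (1:ℝ) else 0) * ∏ k, |mm (q k).1 (q k).2| :=
        (Finset.mul_sum _ _ _).symm
    _ ≤ ν₄ ^ 2 * (1152 * (∑ u, ∑ v, |mm u v| ^ 2) ^ 2) :=
        mul_le_mul_of_nonneg_left hT (by positivity)
    _ ≤ ν₄ ^ 2 * (1152 * Matrix.trace (M ^ 2) ^ 2) := by
        refine mul_le_mul_of_nonneg_left ?_ (by positivity)
        refine mul_le_mul_of_nonneg_left ?_ (by norm_num)
        exact pow_le_pow_left₀ hf0 hfle 2
    _ = 1152 * ν₄ ^ 2 * Matrix.trace (M ^ 2) ^ 2 := by ring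
end

section
/- (Deterministic Taylor remainder bound.) For every constant a > 0 and every δ with 0 ≤ δ ≤ 1 there is a constant C = C(a, δ) > 0 such that for all integers n ≥ 3 and all real numbers u, v with x := u + v ≥ −1 + (log n)^{−a/2}, one has |log(1 + x) − (x − x^2/2)| ≤ C·(u^2 + |v|^{2+δ})·log log n. -/
open Real

set_option maxHeartbeats 1600000 in
/-- **Deterministic Taylor remainder bound.**
For every `a > 0` and `0 ≤ δ ≤ 1` there is `C = C(a, δ) > 0` such that for all
integers `n ≥ 3` and all reals `u, v` with `x := u + v ≥ -1 + (log n)^{-a/2}`,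
`|log(1 + x) - (x - x²/2)| ≤ C (u² + |v|^{2+δ}) log log n`. -/
theorem taylor_remainder_bound (a : ℝ) (ha : 0 < a) (δ : ℝ) (hδ0 : 0 ≤ δ) (hδ1 : δ ≤ 1) :
    ∃ C : ℝ, 0 < C ∧
      ∀ n : ℕ, 3 ≤ n → ∀ u v : ℝ,
        -1 + Real.log n ^ (-(a / 2)) ≤ u + v →
        |Real.log (1 + (u + v)) - ((u + v) - (u + v) ^ 2 / 2)| ≤
          C * (u ^ 2 + |v| ^ (2 + δ)) * Real.log (Real.log n) := by
  have h3 : (1:ℝ) < Real.log 3 := by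
    rw [show (1:ℝ) = Real.log (Real.exp 1) by simp]
    apply Real.log_lt_log (Real.exp_pos 1)
    calc Real.exp 1 < 2.7182818286 := Real.exp_one_lt_d9
      _ < 3 := by norm_num
  set c₀ := Real.log (Real.log 3) with hc₀def
  have hc₀ : 0 < c₀ := Real.log_pos h3
  set C := 32*a + 4000/c₀ with hCdef
  have hC : 0 < C := by
    rw [hCdef]
    exact add_pos (by positivity) (div_pos (by norm_num) hc₀)
  clear_value c₀ C
  refine ⟨C, hC, ?_⟩
  intro n hn u v hxge
  set x := u + v with hxdef
  have hn3 : (3:ℝ) ≤ (n:ℝ) := by exact_mod_cast hn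
  have hln : Real.log 3 ≤ Real.log n := Real.log_le_log (by norm_num) hn3
  have hlnpos : 0 < Real.log n := by linarith
  set L := Real.log (Real.log n) with hLdef
  have hLc : c₀ ≤ L := by
    rw [hLdef, hc₀def]
    exact Real.log_le_log (by linarith) hln
  have hLpos : 0 < L := lt_of_lt_of_le hc₀ hLc
  set S := u^2 + |v|^(2+δ) with hSdef
  have hS : 0 ≤ S := by rw [hSdef]; positivity
  have hε : 0 < Real.log n ^ (-(a/2)) := Real.rpow_pos_of_pos hlnpos _
  clear_value x L S
  have h1x : 0 < 1 + x := by linarith [hxge]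
  have habs : |x| ≤ |u| + |v| := by rw [hxdef]; exact abs_add_le u v
  have hrpow_nn : (0:ℝ) ≤ |v|^(2+δ) := Real.rpow_nonneg (abs_nonneg v) _
  have hmain : 4000 * S ≤ C * S * L := by
    have h5 : (4000/c₀)*c₀ = 4000 := div_mul_cancel₀ _ (ne_of_gt hc₀)
    have hdn : (0:ℝ) ≤ 4000/c₀ := by positivity
    have h6 : (4000/c₀) * c₀ * S ≤ (4000/c₀) * L * S :=
      mul_le_mul_of_nonneg_right (mul_le_mul_of_nonneg_left hLc hdn) hS
    have h7 : 4000 * S ≤ (4000/c₀) * L * S := by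
      calc 4000 * S = (4000/c₀) * c₀ * S := by rw [h5]
        _ ≤ (4000/c₀) * L * S := h6
    have hCSL : C * S * L = 32*a*S*L + (4000/c₀)*L*S := by rw [hCdef]; ring
    have h8 : 0 ≤ 32*a*S*L := by positivity
    linarith
  rcases le_or_gt |x| (1/2) with hsm | hbig
  · -- small x : |R| ≤ 2|x|^3 ≤ 16 S
    have hkey := Real.abs_log_sub_add_sum_range_le
      (x := -x) (by rw [abs_neg]; linarith) 2
    have hsum : (∑ i ∈ Finset.range 2, (-x)^(i+1)/(i+1)) = -x + x^2/2 := by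
      simp [Finset.sum_range_succ]
      ring
    rw [hsum, abs_neg] at hkey
    have heq : Real.log (1 + x) - (x - x^2/2) = (-x + x^2/2) + Real.log (1 - -x) := by
      rw [show (1:ℝ) - -x = 1 + x by ring]; ring
    rw [heq]
    have hb1 : |x|^(2+1)/(1-|x|) ≤ 2*|x|^3 := by
      norm_num
      rw [div_le_iff₀ (by linarith : (0:ℝ) < 1 - |x|)]
      nlinarith [mul_nonneg (pow_nonneg (abs_nonneg x) 3)
          (by linarith : (0:ℝ) ≤ 1 - 2*|x|)]
    have h8 : |x|^3 ≤ 8*S := by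
      rw [hSdef]
      have hx3 : |x|^3 ≤ (1/2:ℝ)^3 := pow_le_pow_left₀ (abs_nonneg x) hsm 3
      rcases le_total |u| |v| with huv | huv
      · rcases le_total |v| 1 with hv1 | hv1
        · have hv3 : |v|^3 ≤ |v|^(2+δ) := by
            rcases eq_or_lt_of_le (abs_nonneg v) with h0 | h0
            · rw [← h0]
              norm_num [Real.zero_rpow (show (2:ℝ)+δ ≠ 0 by linarith)]
            · calc |v|^3 = |v|^((3:ℕ):ℝ) := (Real.rpow_natCast _ 3).symm
                _ ≤ |v|^(2+δ) := Real.rpow_le_rpow_of_exponent_ge h0 hv1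
                    (by push_cast; linarith)
          have hxv : |x|^3 ≤ 8*|v|^3 := by
            have h2v : |x| ≤ 2*|v| := by linarith
            calc |x|^3 ≤ (2*|v|)^3 := pow_le_pow_left₀ (abs_nonneg x) h2v 3
              _ = 8*|v|^3 := by ring
          nlinarith [sq_nonneg u]
        · have h1v : (1:ℝ) ≤ |v|^(2+δ) := by
            have := Real.rpow_le_rpow_of_exponent_le hv1
              (show (0:ℝ) ≤ 2+δ by linarith)
            rwa [Real.rpow_zero] at this
          nlinarith [sq_nonneg u]
      · rcases le_total |u| 1 with hu1 | hu1
        · have hxu : |x|^3 ≤ 8*|u|^3 := by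
            have h2u : |x| ≤ 2*|u| := by linarith
            calc |x|^3 ≤ (2*|u|)^3 := pow_le_pow_left₀ (abs_nonneg x) h2u 3
              _ = 8*|u|^3 := by ring
          have hu3 : |u|^3 ≤ u^2 := by
            nlinarith [sq_abs u, mul_nonneg (mul_nonneg (abs_nonneg u) (abs_nonneg u))
              (by linarith : (0:ℝ) ≤ 1 - |u|)]
          linarith
        · have h1u : (1:ℝ) ≤ u^2 := by nlinarith [sq_abs u]
          nlinarith
    calc |(-x + x^2/2) + Real.log (1 - -x)| ≤ |x|^(2+1)/(1-|x|) := hkey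
      _ ≤ 2*|x|^3 := hb1
      _ ≤ 16*S := by linarith
      _ ≤ C*S*L := by linarith [hmain, hS]
  · -- large x
    have hS64 : (1/64:ℝ) ≤ S := by
      rw [hSdef]
      rcases le_total |u| |v| with huv | huv
      · have hv : (1/4:ℝ) ≤ |v| := by linarith
        have h1 : ((1:ℝ)/4)^(2+δ) ≤ |v|^(2+δ) :=
          Real.rpow_le_rpow (by norm_num) hv (by linarith)
        have h2 : ((1:ℝ)/4)^((3:ℕ):ℝ) ≤ ((1:ℝ)/4)^(2+δ) :=
          Real.rpow_le_rpow_of_exponent_ge (by norm_num) (by norm_num)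
            (by push_cast; linarith)
        rw [Real.rpow_natCast] at h2
        norm_num at h2
        nlinarith [sq_nonneg u]
      · have hu : (1/4:ℝ) ≤ |u| := by linarith
        nlinarith [sq_abs u]
    rcases le_or_gt x 0 with hneg | hpos
    · -- x < -1/2
      have habsx : |x| = -x := abs_of_nonpos hneg
      have hx2 : x < -(1/2) := by rw [habsx] at hbig; linarith
      have hx1 : x^2 ≤ 1 := by
        nlinarith [mul_pos (show (0:ℝ) < 1 - x by linarith) h1x]
      have hlog_ub : Real.log (1+x) ≤ x := by
        have := Real.log_le_sub_one_of_pos h1x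
        linarith
      have hlog_lb : -(a/2) * L ≤ Real.log (1+x) := by
        have h7 : Real.log (Real.log n ^ (-(a/2))) ≤ Real.log (1+x) :=
          Real.log_le_log hε (by linarith [hxge])
        rwa [Real.log_rpow hlnpos, ← hLdef] at h7
      have hRb : |Real.log (1+x) - (x - x^2/2)| ≤ (a/2)*L + 3/2 := by
        rw [abs_le]
        constructor
        · nlinarith [sq_nonneg x]
        · nlinarith [mul_pos ha hLpos, sq_nonneg x]
      have hfin : (a/2)*L + 3/2 ≤ C*S*L := by
        have h1r : C*(1/64)*L ≤ C*S*L := by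
          nlinarith [mul_nonneg (mul_nonneg hC.le hLpos.le)
            (by linarith : (0:ℝ) ≤ S - 1/64)]
        have h5 : (4000/c₀)*c₀ = 4000 := div_mul_cancel₀ _ (ne_of_gt hc₀)
        have hdn : (0:ℝ) ≤ 4000/c₀ := by positivity
        have h6 : (4000:ℝ) ≤ (4000/c₀)*L := by
          calc (4000:ℝ) = (4000/c₀)*c₀ := h5.symm
            _ ≤ (4000/c₀)*L := mul_le_mul_of_nonneg_left hLc hdn
        have hCL : C*L = 32*a*L + (4000/c₀)*L := by rw [hCdef]; ring
        nlinarith [h1r, h6, hCL]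
      linarith [hRb, hfin]
    · -- x > 1/2
      have habsx : |x| = x := abs_of_pos hpos
      have hx2 : 1/2 < x := by rwa [habsx] at hbig
      have hlogub : Real.log (1+x) ≤ x := by
        have := Real.log_le_sub_one_of_pos h1x; linarith
      have hlognn : 0 ≤ Real.log (1+x) := Real.log_nonneg (by linarith)
      have hRb : |Real.log (1+x) - (x - x^2/2)| ≤ 2*x^2 := by
        rw [abs_le]
        constructor
        · nlinarith
        · nlinarith
      have hv2 : v^2 ≤ 64*S := by
        rcases le_total |v| 1 with hv1 | hv1
        · have hv2' : v^2 ≤ 1 := by nlinarith [sq_abs v, abs_nonneg v]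
          linarith
        · have h2 : |v|^((2:ℕ):ℝ) ≤ |v|^(2+δ) :=
            Real.rpow_le_rpow_of_exponent_le hv1 (by push_cast; linarith)
          rw [Real.rpow_natCast] at h2
          rw [hSdef]
          nlinarith [sq_abs v, sq_nonneg u]
      have hx2b : x^2 ≤ 130*S := by
        have hu2 : u^2 ≤ S := by rw [hSdef]; linarith
        nlinarith [sq_nonneg (u - v), hxdef]
      calc |Real.log (1+x) - (x - x^2/2)| ≤ 2*x^2 := hRb
        _ ≤ 260*S := by linarith
        _ ≤ C*S*L := by linarith [hmain, hS]
end

section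
/- (Cofactor–Cauchy–Binet identity.) Let A be an (n−1)×n real matrix, let b_k ∈ ℝ^{n−1} denote its k-th column, and let A_k denote the (n−1)×(n−1) matrix obtained from A by deleting its k-th column; assume each A_k is invertible. Let α_k = (−1)^{n+k}·det A_k (the cofactor) and Δ^2 = Σ_{k=1}^n α_k^2. Then Δ^2 = det(A·A^T), and for each k, (α_k/Δ)^2 = ( 1 + b_k^T·(A_k·A_k^T)^{−1}·b_k )^{−1}. -/
open Matrix

/-- The cofactor `α_k = (-1)^{(n+1)+(k+1)} det A_k` corresponding to deleting the `k`-th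
column of the `n × (n+1)` matrix `A` (in the paper's notation, `A` is an
`(n-1) × n` matrix and these are the cofactors of an appended last row). -/
noncomputable def cofac {n : ℕ} (A : Matrix (Fin n) (Fin (n + 1)) ℝ) (k : Fin (n + 1)) : ℝ :=
  (-1 : ℝ) ^ (n + (k : ℕ)) * (A.submatrix id (Fin.succAbove k)).det

/-- appended-row matrix -/
noncomputable def rowApp {n : ℕ} (A : Matrix (Fin n) (Fin (n + 1)) ℝ) (x : Fin (n+1) → ℝ) :
    Matrix (Fin (n+1)) (Fin (n+1)) ℝ :=
  Matrix.of fun i j => Fin.lastCases (x j) (fun i' => A i' j) i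

lemma det_rowApp {n : ℕ} (A : Matrix (Fin n) (Fin (n + 1)) ℝ) (x : Fin (n+1) → ℝ) :
    (rowApp A x).det = ∑ j, x j * cofac A j := by
  rw [Matrix.det_succ_row _ (Fin.last n)]
  refine Finset.sum_congr rfl fun j _ => ?_
  have h1 : (rowApp A x).submatrix (Fin.last n).succAbove j.succAbove
      = A.submatrix id j.succAbove := by
    ext i' j'
    simp [rowApp, Fin.succAbove_last]
  have h2 : rowApp A x (Fin.last n) j = x j := by simp [rowApp]
  rw [h1, h2, cofac]
  simp [Fin.val_last]
  ring

lemma orth {n : ℕ} (A : Matrix (Fin n) (Fin (n + 1)) ℝ) (i : Fin n) :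
    ∑ j, A i j * cofac A j = 0 := by
  rw [← det_rowApp]
  refine Matrix.det_zero_of_row_eq (i := i.castSucc) (j := Fin.last n)
    (Fin.castSucc_lt_last i).ne ?_
  ext j
  simp [rowApp]

lemma part1 {n : ℕ} (A : Matrix (Fin n) (Fin (n + 1)) ℝ)
    (hD : (∑ k, cofac A k ^ 2) ≠ 0) :
    (∑ k, cofac A k ^ 2) = (A * Aᵀ).det := by
  set B := rowApp A (cofac A) with hB
  set D := ∑ k, cofac A k ^ 2 with hDdef
  have hdetB : B.det = D := by
    rw [hB, det_rowApp]
    exact Finset.sum_congr rfl fun j _ => (sq (cofac A j)).symm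
  have key : (B * Bᵀ).det = D * D := by
    rw [Matrix.det_mul, Matrix.det_transpose, hdetB]
  -- expand along last row
  have hrow : ∀ j : Fin n, (B * Bᵀ) (Fin.last n) j.castSucc = 0 := by
    intro j
    have := orth A j
    simp only [Matrix.mul_apply, Matrix.transpose_apply]
    calc ∑ l, B (Fin.last n) l * B j.castSucc l
        = ∑ l, A j l * cofac A l := by
          refine Finset.sum_congr rfl fun l _ => ?_
          simp [hB, rowApp]; ring
      _ = 0 := orth A j
  have hdiag : (B * Bᵀ) (Fin.last n) (Fin.last n) = D := by
    simp only [Matrix.mul_apply, Matrix.transpose_apply, hDdef]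
    refine Finset.sum_congr rfl fun l _ => ?_
    simp [hB, rowApp, sq]
  have hminor : (B * Bᵀ).submatrix (Fin.last n).succAbove (Fin.last n).succAbove
      = A * Aᵀ := by
    ext i j
    simp only [Matrix.submatrix_apply, Fin.succAbove_last, Matrix.mul_apply,
      Matrix.transpose_apply]
    refine Finset.sum_congr rfl fun l _ => ?_
    simp [hB, rowApp]
  have expand : (B * Bᵀ).det = D * (A * Aᵀ).det := by
    rw [Matrix.det_succ_row _ (Fin.last n), Fin.sum_univ_castSucc]
    simp only [hrow, mul_zero, zero_mul, Finset.sum_const_zero, zero_add]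
    rw [hdiag, hminor]
    have : ((-1 : ℝ)) ^ ((Fin.last n : ℕ) + (Fin.last n : ℕ)) = 1 := by
      rw [Fin.val_last, ← two_mul, pow_mul]
      norm_num
    rw [this]; ring
  have := key.symm.trans expand
  exact (mul_left_cancel₀ hD this.symm).symm

lemma part2 {n : ℕ} (A : Matrix (Fin n) (Fin (n + 1)) ℝ)
    (hinv : ∀ k : Fin (n + 1), IsUnit (A.submatrix id (Fin.succAbove k)).det)
    (k : Fin (n + 1)) :
    (A * Aᵀ).det = (cofac A k ^ 2) *
      (1 + (fun i => A i k) ⬝ᵥ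
        ((A.submatrix id (Fin.succAbove k) * (A.submatrix id (Fin.succAbove k))ᵀ)⁻¹
          *ᵥ fun i => A i k)) := by
  set Ak := A.submatrix id (Fin.succAbove k) with hAk
  set b : Fin n → ℝ := fun i => A i k with hb
  set M := Ak * Akᵀ with hM
  have hdetM : M.det = cofac A k ^ 2 := by
    rw [hM, Matrix.det_mul, Matrix.det_transpose, cofac, ← hAk, mul_pow, ← pow_mul,
      pow_mul', neg_one_sq, one_pow, one_mul, sq]
  have hMunit : IsUnit M.det := by
    rw [hM, Matrix.det_mul, Matrix.det_transpose]
    exact (hinv k).mul (hinv k)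
  have hsplit : A * Aᵀ = M + replicateCol Unit b * replicateRow Unit b := by
    ext i j
    simp only [Matrix.mul_apply, Matrix.transpose_apply, Matrix.add_apply, hM,
      Matrix.replicateCol_apply, Matrix.replicateRow_apply, hAk, Matrix.submatrix_apply, id_eq]
    rw [Fin.sum_univ_succAbove (fun l => A i l * A j l) k]
    simp only [Finset.univ_unique, Finset.sum_const, Finset.card_singleton, one_smul]
    rw [add_comm]
  rw [hsplit, Matrix.det_add_replicateCol_mul_replicateRow hMunit, hdetM, Matrix.det_unique]
  congr 1
  simp only [Matrix.add_apply, Matrix.one_apply_eq, Matrix.mul_apply, Matrix.replicateRow_apply,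
    Matrix.replicateCol_apply, dotProduct, Matrix.mulVec, ← hM, ← hb]
  congr 1
  simp only [Finset.sum_mul, Finset.mul_sum]
  rw [Finset.sum_comm]
  exact Finset.sum_congr rfl fun i _ => Finset.sum_congr rfl fun l _ => by ring

/-- **Cofactor–Cauchy–Binet identity.**
Let `A` be an `(n-1) × n` real matrix (here: `n × (n+1)`), `b_k` its `k`-th column and
`A_k` the square matrix obtained by deleting the `k`-th column; assume each `A_k` is
invertible.  With `α_k = (-1)^{n+k} det A_k` and `Δ² = Σ_k α_k²`, one has
`Δ² = det (A Aᵀ)` and `(α_k/Δ)² = (1 + b_kᵀ (A_k A_kᵀ)⁻¹ b_k)⁻¹` for each `k`. -/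
theorem cofactor_cauchy_binet (n : ℕ) (A : Matrix (Fin n) (Fin (n + 1)) ℝ)
    (hinv : ∀ k : Fin (n + 1), IsUnit (A.submatrix id (Fin.succAbove k)).det) :
    (∑ k, cofac A k ^ 2) = (A * Aᵀ).det ∧
    ∀ k : Fin (n + 1),
      (cofac A k / Real.sqrt (∑ j, cofac A j ^ 2)) ^ 2 =
        (1 + (fun i => A i k) ⬝ᵥ
          ((A.submatrix id (Fin.succAbove k) * (A.submatrix id (Fin.succAbove k))ᵀ)⁻¹
            *ᵥ fun i => A i k))⁻¹ := by
  have hc : ∀ k, cofac A k ≠ 0 := fun k =>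
    mul_ne_zero (pow_ne_zero _ (by norm_num)) (hinv k).ne_zero
  have hD : 0 < ∑ k, cofac A k ^ 2 :=
    Finset.sum_pos' (fun i _ => sq_nonneg _)
      ⟨0, Finset.mem_univ 0, lt_of_le_of_ne (sq_nonneg _) (Ne.symm (pow_ne_zero 2 (hc 0)))⟩
  refine ⟨part1 A hD.ne', fun k => ?_⟩
  have h2 := part2 A hinv k
  rw [← part1 A hD.ne'] at h2
  rw [div_pow, Real.sq_sqrt hD.le]
  have hck : cofac A k ^ 2 ≠ 0 := pow_ne_zero _ (hc k)
  set t := (fun i => A i k) ⬝ᵥ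
    ((A.submatrix id (Fin.succAbove k) * (A.submatrix id (Fin.succAbove k))ᵀ)⁻¹
      *ᵥ fun i => A i k) with ht
  have h3 : (1 + t) = (∑ j, cofac A j ^ 2) / cofac A k ^ 2 := by
    rw [h2]; field_simp
    exact (mul_div_cancel_right₀ _ (hc k)).symm
  rw [h3, inv_div]
end

section
/- (Rank-one resolvent trace perturbation bound.) Let S be a symmetric positive semidefinite i×i real matrix, b ∈ ℝ^i, and α > 0. Then tr( (S + α·I_i)^{−1} ) − tr( (S + b·b^T + α·I_i)^{−1} ) = b^T·(S + α·I_i)^{−2}·b / ( 1 + b^T·(S + α·I_i)^{−1}·b ), and this quantity lies in the interval [0, α^{−1}]. -/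
open Matrix

private lemma vecMulVec_mul' {n : ℕ} (w v : Fin n → ℝ) (M : Matrix (Fin n) (Fin n) ℝ) :
    vecMulVec w v * M = vecMulVec w (v ᵥ* M) := by
  ext i j
  simp [mul_apply, vecMulVec_apply, vecMul, dotProduct, Finset.mul_sum, mul_assoc]

private lemma vecMulVec_mul_vecMulVec' {n : ℕ} (w v x y : Fin n → ℝ) :
    vecMulVec w v * vecMulVec x y = (v ⬝ᵥ x) • vecMulVec w y := by
  ext i j
  simp only [mul_apply, vecMulVec_apply, Matrix.smul_apply, dotProduct, smul_eq_mul,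
    Finset.sum_mul]
  exact Finset.sum_congr rfl fun k _ => by ring

private lemma trace_vecMulVec' {n : ℕ} (w v : Fin n → ℝ) :
    Matrix.trace (vecMulVec w v) = w ⬝ᵥ v := by
  simp [Matrix.trace, vecMulVec_apply, dotProduct, Matrix.diag]

/-- **Rank-one resolvent trace perturbation bound.**
For a symmetric positive semidefinite `i × i` real matrix `S`, a vector `b ∈ ℝ^i` and
`α > 0`, `tr((S + α I)⁻¹) - tr((S + b bᵀ + α I)⁻¹)` equals
`bᵀ (S + α I)⁻² b / (1 + bᵀ (S + α I)⁻¹ b)` and lies in `[0, α⁻¹]`. -/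
theorem rank_one_resolvent_trace_perturbation (i : ℕ) (S : Matrix (Fin i) (Fin i) ℝ)
    (hS : S.PosSemidef) (b : Fin i → ℝ) (α : ℝ) (hα : 0 < α) :
    Matrix.trace ((S + α • (1 : Matrix (Fin i) (Fin i) ℝ))⁻¹) -
        Matrix.trace ((S + Matrix.vecMulVec b b + α • (1 : Matrix (Fin i) (Fin i) ℝ))⁻¹) =
      b ⬝ᵥ (((S + α • (1 : Matrix (Fin i) (Fin i) ℝ))⁻¹ *
          (S + α • (1 : Matrix (Fin i) (Fin i) ℝ))⁻¹) *ᵥ b) /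
        (1 + b ⬝ᵥ ((S + α • (1 : Matrix (Fin i) (Fin i) ℝ))⁻¹ *ᵥ b)) ∧
    0 ≤ Matrix.trace ((S + α • (1 : Matrix (Fin i) (Fin i) ℝ))⁻¹) -
        Matrix.trace ((S + Matrix.vecMulVec b b + α • (1 : Matrix (Fin i) (Fin i) ℝ))⁻¹) ∧
    Matrix.trace ((S + α • (1 : Matrix (Fin i) (Fin i) ℝ))⁻¹) -
        Matrix.trace ((S + Matrix.vecMulVec b b + α • (1 : Matrix (Fin i) (Fin i) ℝ))⁻¹)
      ≤ α⁻¹ := by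
  set A : Matrix (Fin i) (Fin i) ℝ := S + α • (1 : Matrix (Fin i) (Fin i) ℝ) with hA
  set B : Matrix (Fin i) (Fin i) ℝ := vecMulVec b b with hB
  -- A is positive definite
  have hAh : A.IsHermitian := by
    have h1 : (α • (1 : Matrix (Fin i) (Fin i) ℝ)).IsHermitian := by
      ext j k
      simp [Matrix.IsHermitian, Matrix.conjTranspose, Matrix.one_apply, eq_comm]
    exact hS.isHermitian.add h1
  have hApd : A.PosDef := by
    refine Matrix.PosDef.of_dotProduct_mulVec_pos hAh fun x hx => ?_
    have h1 : A *ᵥ x = S *ᵥ x + α • x := by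
      rw [hA, Matrix.add_mulVec, Matrix.smul_mulVec, Matrix.one_mulVec]
    rw [h1, star_trivial, dotProduct_add, dotProduct_smul]
    have h2 : 0 ≤ x ⬝ᵥ (S *ᵥ x) := by simpa using hS.dotProduct_mulVec_nonneg x
    have h3 : 0 < x ⬝ᵥ x := by
      have hnn : 0 ≤ x ⬝ᵥ x := Finset.sum_nonneg fun j _ => mul_self_nonneg (x j)
      refine lt_of_le_of_ne hnn fun h => hx ?_
      exact (dotProduct_self_eq_zero (v := x)).mp h.symm
    have : 0 < α * (x ⬝ᵥ x) := mul_pos hα h3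
    simpa [smul_eq_mul] using by linarith
  have hAunit : IsUnit A.det := hApd.det_pos.ne'.isUnit
  have hAAinv : A * A⁻¹ = 1 := Matrix.mul_nonsing_inv A hAunit
  have hAinvA : A⁻¹ * A = 1 := Matrix.nonsing_inv_mul A hAunit
  have hAinvh : A⁻¹.IsHermitian := hAh.inv
  have hAinvT : A⁻¹ᵀ = A⁻¹ := by
    have := hAinvh.eq
    simpa [Matrix.conjTranspose_eq_transpose_of_trivial] using this
  -- key vectors and scalars
  set c : Fin i → ℝ := A⁻¹ *ᵥ b with hc
  set d : ℝ := b ⬝ᵥ (A⁻¹ *ᵥ b) with hd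
  have hvecMul : b ᵥ* A⁻¹ = c := by
    rw [hc, ← hAinvT, Matrix.vecMul_transpose, hAinvT]
  have hAc : A *ᵥ c = b := by
    rw [hc, Matrix.mulVec_mulVec, hAAinv, Matrix.one_mulVec]
  have hdc : d = b ⬝ᵥ c := by rw [hd, hc]
  -- d ≥ 0 : via c ⬝ᵥ A c decomposition
  have hdecomp : d = c ⬝ᵥ (S *ᵥ c) + α * (c ⬝ᵥ c) := by
    have h0 : c ⬝ᵥ (A *ᵥ c) = d := by rw [hAc, dotProduct_comm, hdc]
    rw [← h0]
    have h1 : A *ᵥ c = S *ᵥ c + α • c := by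
      rw [hA, Matrix.add_mulVec, Matrix.smul_mulVec, Matrix.one_mulVec]
    rw [h1, dotProduct_add, dotProduct_smul, smul_eq_mul]
  have hScc : 0 ≤ c ⬝ᵥ (S *ᵥ c) := by simpa using hS.dotProduct_mulVec_nonneg c
  have hcc : 0 ≤ c ⬝ᵥ c := Finset.sum_nonneg fun j _ => mul_self_nonneg (c j)
  have hd0 : 0 ≤ d := by rw [hdecomp]; positivity
  have hden : (0 : ℝ) < 1 + d := by linarith
  -- numerator N
  have hN : b ⬝ᵥ ((A⁻¹ * A⁻¹) *ᵥ b) = c ⬝ᵥ c := by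
    rw [← Matrix.mulVec_mulVec, ← hc, Matrix.dotProduct_mulVec, hvecMul]
  -- Sherman–Morrison
  set t : ℝ := (1 + d)⁻¹ with ht
  have htd : t * (1 + d) = 1 := inv_mul_cancel₀ (ne_of_gt hden)
  have hBAB : B * A⁻¹ * B = d • B := by
    rw [hB, vecMulVec_mul', vecMulVec_mul_vecMulVec', hvecMul]
    congr 1
    rw [hdc, dotProduct_comm]
  have hSM : (S + B + α • (1 : Matrix (Fin i) (Fin i) ℝ))⁻¹
      = A⁻¹ - t • (A⁻¹ * B * A⁻¹) := by
    have hrw : S + B + α • (1 : Matrix (Fin i) (Fin i) ℝ) = A + B := by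
      rw [hA]; abel
    rw [hrw]
    apply Matrix.inv_eq_right_inv
    have expand : (A + B) * (A⁻¹ - t • (A⁻¹ * B * A⁻¹))
        = 1 - t • (B * A⁻¹) + (B * A⁻¹ - (t * d) • (B * A⁻¹)) := by
      rw [Matrix.add_mul, Matrix.mul_sub, Matrix.mul_sub]
      rw [Matrix.mul_smul, Matrix.mul_smul]
      rw [hAAinv]
      congr 2
      · rw [← Matrix.mul_assoc, ← Matrix.mul_assoc, hAAinv, Matrix.one_mul]
      · rw [show B * (A⁻¹ * B * A⁻¹) = (B * A⁻¹ * B) * A⁻¹ by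
          simp only [Matrix.mul_assoc], hBAB, Matrix.smul_mul, smul_smul]
    rw [expand]
    have hcoef : (1 : ℝ) - t - t * d = 0 := by
      have : t + t * d = 1 := by rw [← htd]; ring
      linarith
    have hstep : (1 : Matrix (Fin i) (Fin i) ℝ) - t • (B * A⁻¹) + (B * A⁻¹ - (t * d) • (B * A⁻¹))
        = 1 + ((1 - t - t * d) • (B * A⁻¹)) := by
      rw [sub_smul, sub_smul, one_smul]
      abel
    rw [hstep, hcoef, zero_smul, add_zero]
  -- trace identity
  have htr : Matrix.trace (A⁻¹ * B * A⁻¹) = b ⬝ᵥ ((A⁻¹ * A⁻¹) *ᵥ b) := by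
    rw [Matrix.trace_mul_comm, ← Matrix.mul_assoc, Matrix.trace_mul_comm, hB,
      vecMulVec_mul', trace_vecMulVec', dotProduct_comm, ← Matrix.dotProduct_mulVec]
  have key : Matrix.trace A⁻¹ - Matrix.trace ((S + B + α • (1 : Matrix (Fin i) (Fin i) ℝ))⁻¹)
      = b ⬝ᵥ ((A⁻¹ * A⁻¹) *ᵥ b) / (1 + d) := by
    rw [hSM, Matrix.trace_sub, Matrix.trace_smul, htr, smul_eq_mul,
      sub_sub_cancel, ht, inv_mul_eq_div]
  refine ⟨key, ?_, ?_⟩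
  · rw [key]
    apply div_nonneg _ (le_of_lt hden)
    rw [hN]; exact hcc
  · rw [key, hN]
    rw [div_le_iff₀ hden]
    have h1 : α * (c ⬝ᵥ c) ≤ d := by rw [hdecomp]; linarith
    rw [← sub_nonneg]
    have : α⁻¹ * (1 + d) - c ⬝ᵥ c = α⁻¹ * (1 + d - α * (c ⬝ᵥ c)) := by
      field_simp
    rw [this]
    have : 0 ≤ 1 + d - α * (c ⬝ᵥ c) := by linarith
    positivity
end
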